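/- arXiv:1608.02219 — 3 statements merged into one kernel-verified Lean document; each statement's English description precedes it below -/
import Mathlib

section
/- Energy estimate with arbitrary weight ω: Let (a, μ) ∈ AM(ℝ) (with respect to some nonzero nonnegative periodic Borel measure ρ with ‖ρ‖_unif < ∞), let (u, v) be a solution of H_{a,μ} u = 0, and let ω > 0. Then for all t > 0: ω²·u(t)² + v(t)² ≤ ( ω²·u(0)² + v(0)² ) · exp( ω·‖1/a‖_∞·t + (1/ω)·|μ|((0,t]) ); in particular ω²·u(t)² + v(t)² ≤ ( ω²·u(0)² + v(0)² ) · exp( ω·‖1/a‖_∞·t + (1/ω)·‖μ‖_unif·(t+1) ). -/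
open MeasureTheory Set Filter Topology ENNReal

set_option maxHeartbeats 1600000

noncomputable section

/-- A nonnegative Borel measure on `ℝ` is finite on bounded sets. -/
def FiniteOnBounded (ν : MeasureTheory.Measure ℝ) : Prop :=
  ∀ s : Set ℝ, Bornology.IsBounded s → ν s < ⊤

/-- `⨆ t, ν ((t, t+1])` in `ℝ≥0∞`. -/
def unifE (ν : MeasureTheory.Measure ℝ) : ENNReal := ⨆ t : ℝ, ν (Set.Ioc t (t + 1))

/-- The uniform norm `‖ν‖_unif` as a real number. -/
def unifNorm (ν : MeasureTheory.Measure ℝ) : ℝ := (unifE ν).toReal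

/-- Signed value of the real local measure `μ = (μp, μm)` on a set `B`. -/
def lmVal (μp μm : MeasureTheory.Measure ℝ) (B : Set ℝ) : ℝ := (μp B).toReal - (μm B).toReal

/-- Signed integral `∫ f dμ` w.r.t. the real local measure `μ = (μp, μm)`. -/
def lmInt (μp μm : MeasureTheory.Measure ℝ) (f : ℝ → ℝ) : ℝ := (∫ x, f x ∂μp) - (∫ x, f x ∂μm)

/-- The (topological) support of a measure on `ℝ`. -/
def measSupport (ρ : MeasureTheory.Measure ℝ) : Set ℝ :=
  {x : ℝ | ∀ ε : ℝ, 0 < ε → 0 < ρ (Set.Ioo (x - ε) (x + ε))}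

/-- `p` is a period of `ρ`, i.e. `p ≠ 0` and `ρ (B + p) = ρ B` for all `B`
(note `B + p = (· - p) ⁻¹' B`). -/
def IsPeriod (ρ : MeasureTheory.Measure ℝ) (p : ℝ) : Prop :=
  p ≠ 0 ∧ ∀ B : Set ℝ, ρ ((fun x => x - p) ⁻¹' B) = ρ B

/-- Supremum norm of a (bounded) function. -/
def supNorm (a : ℝ → ℝ) : ℝ := sSup (Set.range a)

/-- The class `AM(ℝ)`: `a` Borel measurable with `0 < inf a` and `sup a < ∞`, and
`μ = (μp, μm)` a real local measure with `‖μ‖_unif < ∞` and `|μ|(ℝ ∖ supp ρ) = 0`. -/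
structure AM (ρ : MeasureTheory.Measure ℝ) (a : ℝ → ℝ)
    (μp μm : MeasureTheory.Measure ℝ) : Prop where
  meas_a : Measurable a
  inf_pos : 0 < ⨅ x : ℝ, a x
  bddAbove : BddAbove (Set.range a)
  finp : FiniteOnBounded μp
  finm : FiniteOnBounded μm
  unif_lt_top : unifE (μp + μm) < ⊤
  supp_sub : (μp + μm) ((measSupport ρ)ᶜ) = 0

/-- `(u, v)` is a solution of `H_{a,μ} u = z u` with weight `ρ`
(`v` playing the role of `a·u'`). -/
structure IsSolution (a : ℝ → ℝ) (μp μm ρ : MeasureTheory.Measure ℝ) (z : ℝ)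
    (u v : ℝ → ℝ) : Prop where
  meas_u : Measurable u
  meas_v : Measurable v
  eq_u : ∀ t : ℝ, u t = u 0 + ∫ s in (0:ℝ)..t, v s / a s
  eq_v : ∀ s t : ℝ, s ≤ t →
    v t - v s = ((∫ x in Set.Ioc s t, u x ∂μp) - (∫ x in Set.Ioc s t, u x ∂μm))
      - z * ∫ x in Set.Ioc s t, u x ∂ρ

/-- `(u, v)` is a solution of `H_{a,μ} u = 0`. -/
structure IsSolution0 (a : ℝ → ℝ) (μp μm : MeasureTheory.Measure ℝ)
    (u v : ℝ → ℝ) : Prop where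
  meas_u : Measurable u
  meas_v : Measurable v
  eq_u : ∀ t : ℝ, u t = u 0 + ∫ s in (0:ℝ)..t, v s / a s
  eq_v : ∀ s t : ℝ, s ≤ t →
    v t - v s = (∫ x in Set.Ioc s t, u x ∂μp) - (∫ x in Set.Ioc s t, u x ∂μm)

/-- Wasserstein-type seminorm `‖μ − ν‖_I` of the difference of two real local measures. -/
def wNorm (μp μm νp νm : MeasureTheory.Measure ℝ) (I : Set ℝ) : ℝ :=
  sSup {r : ℝ | ∃ w : ℝ → ℝ, LipschitzWith 1 w ∧ HasCompactSupport w ∧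
    tsupport w ⊆ I ∧ Metric.diam (tsupport w) ≤ 2 ∧
    r = |lmInt μp μm w - lmInt νp νm w|}

/-- Translate of a measure: `(lmTranslate ν p) B = ν (B + p)`. -/
def lmTranslate (ν : MeasureTheory.Measure ℝ) (p : ℝ) : MeasureTheory.Measure ℝ :=
  MeasureTheory.Measure.map (fun x => x - p) ν

/-- The primitive `φ_μ` of a real local measure `μ = (μp, μm)`. -/
def phiLM (μp μm : MeasureTheory.Measure ℝ) (t : ℝ) : ℝ :=
  if 0 ≤ t then lmVal μp μm (Set.Ioc 0 t) else -(lmVal μp μm (Set.Ioc t 0))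

lemma exp_key {s : ℝ} (hs : 0 ≤ s) : s * Real.exp (s/2) ≤ Real.exp s - 1 := by
  have h1 : s/2 ≤ Real.sinh (s/2) := Real.self_le_sinh_iff.mpr (by linarith)
  rw [Real.sinh_eq] at h1
  have h2 : (0:ℝ) < Real.exp (s/2) := Real.exp_pos _
  have h3 : Real.exp (s/2) * Real.exp (s/2) = Real.exp s := by
    rw [← Real.exp_add]; ring_nf
  have h4 : Real.exp (-(s/2)) * Real.exp (s/2) = 1 := by
    rw [← Real.exp_add]; simp
  nlinarith [h1, h2]

lemma jumpStep {x w r s : ℝ} (hrs : |r| ≤ s) :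
    x^2 + (w + x*r)^2 ≤ (x^2 + w^2) * Real.exp s := by
  have hs : 0 ≤ s := le_trans (abs_nonneg r) hrs
  set q := Real.exp s - 1 with hq
  have hexp : Real.exp s = q + 1 := by simp [hq]
  have hq0 : 0 ≤ q := by
    have := Real.one_le_exp hs; simp [hq]; linarith
  have hkey : s * Real.exp (s/2) ≤ q := exp_key hs
  have h3 : Real.exp (s/2) * Real.exp (s/2) = Real.exp s := by
    rw [← Real.exp_add]; ring_nf
  have hq2 : s^2 * (q + 1) ≤ q^2 := by
    have he2 : (0:ℝ) < Real.exp (s/2) := Real.exp_pos _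
    nlinarith [hkey, mul_nonneg hs he2.le]
  have habs1 : 2*(w*(x*r)) ≤ 2*(|w| * (|x| * s)) := by
    have h0 : w*(x*r) ≤ |w*(x*r)| := le_abs_self _
    have h2 : |w*(x*r)| = |w| * (|x| * |r|) := by rw [abs_mul, abs_mul]
    have h4 : |w| * (|x| * |r|) ≤ |w| * (|x| * s) := by
      apply mul_le_mul_of_nonneg_left _ (abs_nonneg w)
      exact mul_le_mul_of_nonneg_left hrs (abs_nonneg x)
    linarith
  have habs2 : x^2*r^2 ≤ x^2*s^2 := by
    apply mul_le_mul_of_nonneg_left _ (sq_nonneg x)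
    nlinarith [abs_nonneg r, sq_abs r, hrs]
  have hmain : 2*(|w| * (|x| * s)) + x^2*s^2 ≤ (x^2 + w^2) * q := by
    rcases eq_or_lt_of_le hq0 with h | hqpos
    · have hs0 : s = 0 := by nlinarith [hq2, sq_nonneg s]
      simp [hs0, ← h]
    · have hxa : |x|^2 = x^2 := sq_abs x
      have hwa : |w|^2 = w^2 := sq_abs w
      have hA : 0 ≤ |x| := abs_nonneg x
      have hB : 0 ≤ |w| := abs_nonneg w
      rw [← hxa, ← hwa]
      nlinarith [hq2, sq_nonneg (s * abs x - q * abs w), hqpos, mul_nonneg hA hB,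
        sq_nonneg (abs x * s), mul_le_mul_of_nonneg_right hq2 (sq_nonneg (abs x))]
  rw [hexp]; nlinarith [habs1, habs2, hmain]

lemma setInt_bound {ν : Measure ℝ} {u : ℝ → ℝ} {s : Set ℝ}
    (hsm : MeasurableSet s) (hν : ν s < ⊤) {C : ℝ} (hC : ∀ x ∈ s, |u x| ≤ C) :
    |∫ x in s, u x ∂ν| ≤ C * (ν s).toReal := by
  have := norm_setIntegral_le_of_norm_le_const hν (f := u) (C := C)
    (fun x hx => by simpa using hC x hx)
  simpa [Measure.real] using this

lemma step1_core {A B M' W x y ν₁ ν₂ δ : ℝ}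
    (hA0 : 0 ≤ A) (hB0 : 0 ≤ B) (hδ0 : 0 < δ) (hδ : δ ≤ 1/2)
    (hν₁ : 0 ≤ ν₁) (hν₂ : 0 ≤ ν₂) (hν : ν₁ + ν₂ ≤ δ)
    (hM' : M'*(1-δ^2) = A + δ*B) (hM0 : 0 ≤ M') (hW : W = B + ν₂*M')
    (hx : |x| ≤ A + ν₁*W) (hy : |y| ≤ B + ν₂*M') :
    x^2 + y^2 ≤ (A^2+B^2)*(1 + (1+10*δ)*(ν₁+ν₂)) := by
  have hden : (0:ℝ) < 1 - δ^2 := by nlinarith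
  have hE0 : (0:ℝ) ≤ A^2 + B^2 := by positivity
  have hW0 : 0 ≤ W := by
    rw [hW]; have := mul_nonneg hν₂ hM0; linarith
  have h2ab : 2*A*B ≤ A^2+B^2 := by nlinarith [sq_nonneg (A-B)]
  have hMle : M' ≤ (4/3)*A + (2/3)*B := by
    have e1 : M'*δ^2 ≤ M'*(1/4) :=
      mul_le_mul_of_nonneg_left (by nlinarith : δ^2 ≤ (1/4:ℝ)) hM0
    have e2 : δ*B ≤ (1/2)*B := by
      have := mul_le_mul_of_nonneg_right hδ hB0; linarith
    nlinarith [hM', e1, e2]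
  have hM2 : M'^2 ≤ (8/3)*(A^2+B^2) := by
    have h1 : M'^2 ≤ ((4/3)*A + (2/3)*B)^2 := by
      have := pow_le_pow_left₀ hM0 hMle 2
      simpa using this
    nlinarith [h1, sq_nonneg (A-B)]
  have hWle2 : W ≤ (2/3)*A + (4/3)*B := by
    have e1 : ν₂*M' ≤ δ*M' := mul_le_mul_of_nonneg_right (by linarith) hM0
    have e2 : δ*M' ≤ (1/2)*M' := mul_le_mul_of_nonneg_right hδ hM0
    nlinarith [hW, hMle, e1, e2]
  have hW2 : W^2 ≤ (8/3)*(A^2+B^2) := by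
    have h1 : W^2 ≤ ((2/3)*A + (4/3)*B)^2 := by
      have := pow_le_pow_left₀ hW0 hWle2 2
      simpa using this
    nlinarith [h1, sq_nonneg (A-B)]
  have h2am : 2*A*M' ≤ (10/3)*(A^2+B^2) := by nlinarith [hMle, hA0, h2ab]
  have hT1 : 2*A*W ≤ (A^2+B^2)*(1 + (10/3)*δ) := by
    have h1 : 2*A*W ≤ 2*A*B + ν₂*(2*A*M') := by nlinarith [hW, hA0]
    have h2 : ν₂*(2*A*M') ≤ δ*((10/3)*(A^2+B^2)) := by
      apply mul_le_mul (by linarith) h2am (by positivity) (by linarith)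
    nlinarith [h1, h2, h2ab]
  have hT2 : 2*B*M' ≤ (A^2+B^2)*(1+4*δ) := by
    have h1 : (2*B*M')*(1-δ^2) ≤ (A^2+B^2)*(1+2*δ) := by
      have e1 : (2*B*M')*(1-δ^2) = 2*A*B + 2*δ*B^2 := by
        have e0 : (2*B*M')*(1-δ^2) = 2*B*(M'*(1-δ^2)) := by ring
        rw [e0, hM']; ring
      have e2 : B^2 ≤ A^2+B^2 := by nlinarith [sq_nonneg A]
      nlinarith [h2ab, mul_le_mul_of_nonneg_left e2 hδ0.le]
    have h2 : (A^2+B^2)*(1+2*δ) ≤ ((A^2+B^2)*(1+4*δ))*(1-δ^2) := by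
      have h3 : (0:ℝ) ≤ δ*(2 - δ - 4*δ^2) := by nlinarith
      nlinarith [mul_le_mul_of_nonneg_left h3 hE0]
    have h4 : (2*B*M')*(1-δ^2) ≤ ((A^2+B^2)*(1+4*δ))*(1-δ^2) := by linarith
    exact le_of_mul_le_mul_right h4 hden
  have e2 : x^2 ≤ (A + ν₁*W)^2 := by
    have h := pow_le_pow_left₀ (abs_nonneg x) hx 2
    rwa [sq_abs] at h
  have e3 : y^2 ≤ (B + ν₂*M')^2 := by
    have h := pow_le_pow_left₀ (abs_nonneg y) hy 2
    rwa [sq_abs] at h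
  have hsq1 : (ν₁*W)^2 ≤ (δ*ν₁)*((8/3)*(A^2+B^2)) := by
    have h1 : (ν₁*W)^2 = (ν₁*ν₁)*W^2 := by ring
    have h2 : ν₁*ν₁ ≤ δ*ν₁ := by nlinarith
    rw [h1]
    have := mul_le_mul h2 hW2 (by positivity) (by positivity)
    linarith
  have hsq2 : (ν₂*M')^2 ≤ (δ*ν₂)*((8/3)*(A^2+B^2)) := by
    have h1 : (ν₂*M')^2 = (ν₂*ν₂)*M'^2 := by ring
    have h2 : ν₂*ν₂ ≤ δ*ν₂ := by nlinarith
    rw [h1]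
    have := mul_le_mul h2 hM2 (by positivity) (by positivity)
    linarith
  have hcr1 : 2*A*(ν₁*W) ≤ ν₁*((A^2+B^2)*(1 + (10/3)*δ)) := by
    have h0 : 2*A*(ν₁*W) = ν₁*(2*A*W) := by ring
    rw [h0]
    exact mul_le_mul_of_nonneg_left hT1 hν₁
  have hcr2 : 2*B*(ν₂*M') ≤ ν₂*((A^2+B^2)*(1+4*δ)) := by
    have h0 : 2*B*(ν₂*M') = ν₂*(2*B*M') := by ring
    rw [h0]
    exact mul_le_mul_of_nonneg_left hT2 hν₂
  have hrest : ν₁*((A^2+B^2)*(1+(10/3)*δ)) + ν₂*((A^2+B^2)*(1+4*δ))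
      + ((δ*ν₁)*((8/3)*(A^2+B^2)) + (δ*ν₂)*((8/3)*(A^2+B^2)))
      ≤ (1+10*δ)*(ν₁+ν₂)*(A^2+B^2) := by
    have h1 : 0 ≤ δ*ν₁*(A^2+B^2) := by positivity
    have h2 : 0 ≤ δ*ν₂*(A^2+B^2) := by positivity
    nlinarith [h1, h2]
  nlinarith [e2, e3, hsq1, hsq2, hcr1, hcr2, hrest]

lemma step1_algebra {ω δ ν₁ ν₂ up vp uq wq M W : ℝ}
    (hω : 0 < ω) (hδ0 : 0 < δ) (hδ : δ ≤ 1/2) (hν₁ : 0 ≤ ν₁) (hν₂ : 0 ≤ ν₂)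
    (hν : ν₁ + ν₂ ≤ δ)
    (hM : M = (|up| + (δ/ω)*|vp|)/(1-δ^2)) (hW : W = |vp| + M*(ω*ν₂))
    (hdu : |uq - up| ≤ (ν₁/ω)*W) (hdw : |wq - vp| ≤ ν₂*(ω*M)) :
    ω^2*uq^2 + wq^2 ≤ (ω^2*up^2 + vp^2)*(1 + (1+10*δ)*(ν₁+ν₂)) := by
  have hω' : ω ≠ 0 := ne_of_gt hω
  have hden : (0:ℝ) < 1 - δ^2 := by nlinarith
  have hM' : (ω*M)*(1-δ^2) = ω*|up| + δ*|vp| := by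
    rw [hM]; field_simp
  have hM0 : 0 ≤ ω*M := by
    have h1 : 0 ≤ ω*|up| := mul_nonneg hω.le (abs_nonneg _)
    have h2 : 0 ≤ δ*|vp| := mul_nonneg hδ0.le (abs_nonneg _)
    nlinarith
  have hWeq : W = |vp| + ν₂*(ω*M) := by rw [hW]; ring
  have hx : |ω*uq| ≤ ω*|up| + ν₁*W := by
    have hxa : |ω*uq - ω*up| = ω*|uq-up| := by
      rw [show ω*uq-ω*up = ω*(uq-up) from by ring, abs_mul, abs_of_pos hω]
    have h1 : |ω*uq| ≤ |ω*up| + |ω*uq - ω*up| := by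
      calc |ω*uq| = |ω*up + (ω*uq - ω*up)| := by ring_nf
        _ ≤ |ω*up| + |ω*uq - ω*up| := abs_add_le _ _
    have h2 : ω*|uq-up| ≤ ω*((ν₁/ω)*W) := mul_le_mul_of_nonneg_left hdu hω.le
    have h3 : ω*((ν₁/ω)*W) = ν₁*W := by
      rw [show ω*((ν₁/ω)*W) = ν₁/ω*ω*W from by ring, div_mul_cancel₀ _ hω']
    have h4 : |ω*up| = ω*|up| := by rw [abs_mul, abs_of_pos hω]
    linarith
  have hy : |wq| ≤ |vp| + ν₂*(ω*M) := by
    have h1 : |wq| ≤ |vp| + |wq - vp| := by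
      calc |wq| = |vp + (wq - vp)| := by ring_nf
        _ ≤ |vp| + |wq - vp| := abs_add_le _ _
    linarith
  have hcore := step1_core (A := ω*|up|) (B := |vp|) (M' := ω*M) (W := W)
    (x := ω*uq) (y := wq) (mul_nonneg hω.le (abs_nonneg _)) (abs_nonneg _)
    hδ0 hδ hν₁ hν₂ hν hM' hM0 hWeq hx hy
  have e1 : (ω*uq)^2 = ω^2*uq^2 := by ring
  have e2 : (ω*|up|)^2 + |vp|^2 = ω^2*up^2 + vp^2 := by rw [mul_pow, sq_abs, sq_abs]
  rw [e1, e2] at hcore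
  exact hcore

lemma onePiece {a u v : ℝ → ℝ} {μp μm : Measure ℝ} {ω K δ : ℝ}
    (hu : Measurable u) (hv : Measurable v) (ha : Measurable a)
    (hapos : ∀ x, 0 < a x) (haK : ∀ x, 1 / a x ≤ K)
    (hequ : ∀ t : ℝ, u t = u 0 + ∫ s in (0:ℝ)..t, v s / a s)
    (heqv : ∀ s t : ℝ, s ≤ t →
      v t - v s = (∫ x in Set.Ioc s t, u x ∂μp) - (∫ x in Set.Ioc s t, u x ∂μm))
    (hfinp : FiniteOnBounded μp) (hfinm : FiniteOnBounded μm)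
    (hω : 0 < ω) (hδ0 : 0 < δ) (hδ2 : δ ≤ 1/2)
    {p q : ℝ} (hp : 0 ≤ p) (hpq : p < q)
    (hInt : IntervalIntegrable (fun s => v s / a s) volume 0 p)
    (hsmall : ω * K * (q - p) + ((μp (Set.Ioo p q)).toReal + (μm (Set.Ioo p q)).toReal) / ω ≤ δ) :
    IntervalIntegrable (fun s => v s / a s) volume 0 q ∧
      ω^2 * u q ^2 + v q ^2 ≤ (ω^2 * u p ^2 + v p ^2) *
        Real.exp ((1 + 10*δ) *
          (ω*K*(q-p) + ((μp (Set.Ioc p q)).toReal + (μm (Set.Ioc p q)).toReal)/ω)) := by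
  have hω' : ω ≠ 0 := ne_of_gt hω
  have hfmeas : Measurable (fun s => v s / a s) := hv.div ha
  have hK0 : 0 < K := lt_of_lt_of_le (one_div_pos.mpr (hapos 0)) (haK 0)
  have h0q : (0:ℝ) ≤ q := le_trans hp hpq.le
  have hden : (0:ℝ) < 1 - δ^2 := by nlinarith
  have hfpoo : μp (Set.Ioo p q) < ⊤ := hfinp _ (Metric.isBounded_Ioo p q)
  have hfmoo : μm (Set.Ioo p q) < ⊤ := hfinm _ (Metric.isBounded_Ioo p q)
  have hfpsing : μp {q} < ⊤ := hfinp _ (Bornology.isBounded_singleton)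
  have hfmsing : μm {q} < ⊤ := hfinm _ (Bornology.isBounded_singleton)
  obtain ⟨σoo, hσoo⟩ : ∃ r:ℝ, r = (μp (Set.Ioo p q)).toReal + (μm (Set.Ioo p q)).toReal := ⟨_, rfl⟩
  obtain ⟨M, hM⟩ : ∃ r:ℝ, r = (|u p| + (δ/ω)*|v p|)/(1-δ^2) := ⟨_, rfl⟩
  have hσoo0 : 0 ≤ σoo := by rw [hσoo]; positivity
  have hM0 : 0 ≤ M := by rw [hM]; apply div_nonneg _ hden.le; positivity
  have hsum : ω*K*(q-p) + σoo/ω ≤ δ := by rw [hσoo]; exact hsmall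
  have hν₁0 : 0 ≤ ω*K*(q-p) := by
    apply mul_nonneg (mul_nonneg hω.le hK0.le); linarith
  have hKqp : K*(q-p) ≤ δ/ω := by
    rw [le_div_iff₀ hω]
    have h1 : 0 ≤ σoo/ω := div_nonneg hσoo0 hω.le
    nlinarith
  have hσδ : σoo ≤ ω*δ := by
    have h1 : σoo/ω ≤ δ := by nlinarith
    calc σoo = (σoo/ω)*ω := by field_simp
      _ ≤ δ*ω := mul_le_mul_of_nonneg_right h1 hω.le
      _ = ω*δ := by ring
  -- v bound helper
  have vbound : ∀ C, 0 ≤ C → ∀ x, p < x → x < q → (∀ y, p < y → y ≤ x → |u y| ≤ C) →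
      |v x| ≤ |v p| + C*σoo := by
    intro C hC x hpx hxq hb
    have hvx := heqv p x hpx.le
    have hfinIp : μp (Set.Ioc p x) < ⊤ := hfinp _ (Metric.isBounded_Ioc p x)
    have hfinIm : μm (Set.Ioc p x) < ⊤ := hfinm _ (Metric.isBounded_Ioc p x)
    have h1 : |∫ y in Set.Ioc p x, u y ∂μp| ≤ C * (μp (Set.Ioc p x)).toReal :=
      setInt_bound measurableSet_Ioc hfinIp (fun y hy => hb y hy.1 hy.2)
    have h2 : |∫ y in Set.Ioc p x, u y ∂μm| ≤ C * (μm (Set.Ioc p x)).toReal :=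
      setInt_bound measurableSet_Ioc hfinIm (fun y hy => hb y hy.1 hy.2)
    have hsub : Set.Ioc p x ⊆ Set.Ioo p q := fun y hy => ⟨hy.1, lt_of_le_of_lt hy.2 hxq⟩
    have m1 : (μp (Set.Ioc p x)).toReal ≤ (μp (Set.Ioo p q)).toReal :=
      ENNReal.toReal_mono (ne_of_lt hfpoo) (measure_mono hsub)
    have m2 : (μm (Set.Ioc p x)).toReal ≤ (μm (Set.Ioo p q)).toReal :=
      ENNReal.toReal_mono (ne_of_lt hfmoo) (measure_mono hsub)
    have habs : |v x| ≤ |v p| + |v x - v p| := by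
      calc |v x| = |v p + (v x - v p)| := by ring_nf
        _ ≤ |v p| + |v x - v p| := abs_add_le _ _
    have htri : |v x - v p| ≤ C * (μp (Set.Ioc p x)).toReal + C * (μm (Set.Ioc p x)).toReal := by
      rw [hvx]
      calc |(∫ y in Set.Ioc p x, u y ∂μp) - ∫ y in Set.Ioc p x, u y ∂μm|
          ≤ |∫ y in Set.Ioc p x, u y ∂μp| + |∫ y in Set.Ioc p x, u y ∂μm| := abs_sub _ _
        _ ≤ C * (μp (Set.Ioc p x)).toReal + C * (μm (Set.Ioc p x)).toReal := by linarith
    have hm1 := mul_le_mul_of_nonneg_left m1 hC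
    have hm2 := mul_le_mul_of_nonneg_left m2 hC
    have hfin : C*σoo = C*(μp (Set.Ioo p q)).toReal + C*(μm (Set.Ioo p q)).toReal := by
      rw [hσoo]; ring
    linarith
  -- key lemma
  have key : ∀ r, p ≤ r → r ≤ q → IntervalIntegrable (fun s => v s / a s) volume 0 r →
      ∀ τ, p ≤ τ → τ ≤ r → |u τ| ≤ M := by
    intro r hpr hrq hIr
    have h0r : (0:ℝ) ≤ r := hp.trans hpr
    have hcont : ContinuousOn u (Set.Icc 0 r) := by
      have hc := intervalIntegral.continuousOn_primitive_interval' hIr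
        (left_mem_uIcc (a := (0:ℝ)) (b := r))
      have hc2 : ContinuousOn (fun τ => u 0 + ∫ s in (0:ℝ)..τ, v s / a s) (Set.Icc 0 r) := by
        rw [← uIcc_of_le h0r]
        exact continuousOn_const.add hc
      exact hc2.congr (fun τ _ => hequ τ)
    obtain ⟨τs, hτsmem, hmax⟩ :=
      isCompact_Icc.exists_isMaxOn (s := Set.Icc p r) ⟨p, by constructor <;> linarith⟩
        ((continuous_abs.comp_continuousOn (hcont.mono (Set.Icc_subset_Icc hp le_rfl))) :
          ContinuousOn (fun τ => |u τ|) (Set.Icc p r))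
    have hbnd : ∀ x ∈ Set.Icc p r, |u x| ≤ |u τs| := fun x hx => hmax hx
    have hpτs : p ≤ τs := hτsmem.1
    have hτsr : τs ≤ r := hτsmem.2
    have hU0 : 0 ≤ |u τs| := abs_nonneg _
    have hI0τs : IntervalIntegrable (fun s => v s / a s) volume 0 τs := by
      apply hIr.mono_set
      rw [uIcc_of_le h0r, uIcc_of_le (hp.trans hpτs)]
      exact Set.Icc_subset_Icc le_rfl hτsr
    have hIpτs : IntervalIntegrable (fun s => v s / a s) volume p τs := by
      apply hI0τs.mono_set
      rw [uIcc_of_le (hp.trans hpτs), uIcc_of_le hpτs]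
      exact Set.Icc_subset_Icc hp le_rfl
    have hsplit : u τs - u p = ∫ s in p..τs, v s / a s := by
      rw [hequ τs, hequ p]
      have hadd := intervalIntegral.integral_add_adjacent_intervals hInt hIpτs
      linarith [hadd]
    have hv_on : ∀ y ∈ Set.Ioo p τs, |v y| ≤ |v p| + |u τs| *σoo := by
      intro y hy
      refine vbound (|u τs|) hU0 y hy.1 (lt_of_lt_of_le hy.2 (hτsr.trans hrq)) ?_
      intro z hz1 hz2
      exact hbnd z ⟨hz1.le, (hz2.trans hy.2.le).trans hτsr⟩
    have hCnn : 0 ≤ K*(|v p| + |u τs| *σoo) := by positivity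
    have hIoc_int : |∫ s in p..τs, v s / a s| ≤ K*(|v p| + |u τs| *σoo)*(q-p) := by
      rw [intervalIntegral.integral_of_le hpτs,
        setIntegral_congr_set (Ioo_ae_eq_Ioc (a := p) (b := τs)).symm]
      have hvol : volume (Set.Ioo p τs) < ⊤ := by
        rw [Real.volume_Ioo]; exact ENNReal.ofReal_lt_top
      have hb : ∀ y ∈ Set.Ioo p τs, |v y / a y| ≤ K*(|v p| + |u τs| *σoo) := by
        intro y hy
        have h1 : |v y / a y| = |v y| * (1/a y) := by
          rw [abs_div, abs_of_pos (hapos y)]; ring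
        have h2 : |v y| * (1/a y) ≤ (|v p| + |u τs| *σoo) * K := by
          apply mul_le_mul (hv_on y hy) (haK y) (one_div_pos.mpr (hapos y)).le
          positivity
        rw [h1]; linarith [h2]
      have hsb := setInt_bound measurableSet_Ioo hvol hb
      have hvtr : (volume (Set.Ioo p τs)).toReal = τs - p := by
        rw [Real.volume_Ioo, ENNReal.toReal_ofReal (by linarith)]
      rw [hvtr] at hsb
      calc |∫ s in Set.Ioo p τs, v s / a s| ≤ K*(|v p| + |u τs| *σoo)*(τs-p) := hsb
        _ ≤ K*(|v p| + |u τs| *σoo)*(q-p) := by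
            apply mul_le_mul_of_nonneg_left _ hCnn
            linarith [hτsr.trans hrq]
    have hest : |u τs| ≤ |u p| + K*(|v p| + |u τs| *σoo)*(q-p) := by
      have h1 : |u τs| ≤ |u p| + |u τs - u p| := by
        calc |u τs| = |u p + (u τs - u p)| := by ring_nf
          _ ≤ |u p| + |u τs - u p| := abs_add_le _ _
      rw [hsplit] at h1
      linarith [hIoc_int]
    have hUM : |u τs| ≤ M := by
      rw [hM, le_div_iff₀ hden]
      have hexp : K*(|v p| + |u τs| *σoo)*(q-p) =
          (K*(q-p))*|v p| + ((K*(q-p))*σoo)*|u τs| := by ring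
      have hb1 : (K*(q-p))*|v p| ≤ (δ/ω)*|v p| :=
        mul_le_mul_of_nonneg_right hKqp (abs_nonneg _)
      have hKσ : (K*(q-p))*σoo ≤ δ^2 := by
        have h2 : (K*(q-p))*σoo ≤ (δ/ω)*(ω*δ) := by
          apply mul_le_mul hKqp hσδ hσoo0 (div_nonneg hδ0.le hω.le)
        have h3 : (δ/ω)*(ω*δ) = δ^2 := by field_simp
        linarith [h2, h3.le]
      have hb2 : ((K*(q-p))*σoo)*|u τs| ≤ δ^2*|u τs| :=
        mul_le_mul_of_nonneg_right hKσ hU0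
      nlinarith [hest, hb1, hb2, hexp]
    intro τ hpτ hτr
    exact (hbnd τ ⟨hpτ, hτr⟩).trans hUM
  -- rough bound on u over [p,q]
  have hCstar : ∀ τ, p ≤ τ → τ ≤ q → |u τ| ≤ max M |u 0| := by
    intro τ hpτ hτq
    by_cases hI : IntervalIntegrable (fun s => v s / a s) volume 0 τ
    · exact le_trans (key τ hpτ hτq hI τ hpτ le_rfl) (le_max_left _ _)
    · have h0 : u τ = u 0 := by
        rw [hequ τ, intervalIntegral.integral_undef hI, add_zero]
      rw [h0]; exact le_max_right _ _
  have hmax0 : 0 ≤ max M |u 0| := le_trans hM0 (le_max_left _ _)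
  have hvR : ∀ x, p < x → x < q → |v x| ≤ |v p| + (max M |u 0|) * σoo := by
    intro x h1 h2
    exact vbound _ hmax0 x h1 h2 (fun y hy1 hy2 => hCstar y hy1.le (hy2.trans h2.le))
  have hquot : ∀ y (D : ℝ), |v y| ≤ D → ‖v y / a y‖ ≤ K * D := by
    intro y D hD
    have h1 : ‖v y / a y‖ = |v y| * (1/a y) := by
      rw [Real.norm_eq_abs, abs_div, abs_of_pos (hapos y)]; ring
    have h2 : |v y| * (1/a y) ≤ D * K := by
      apply mul_le_mul hD (haK y) (one_div_pos.mpr (hapos y)).le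
      exact (abs_nonneg _).trans hD
    rw [h1]; linarith
  have hIooInt : IntegrableOn (fun s => v s / a s) (Set.Ioo p q) volume := by
    apply Measure.integrableOn_of_bounded (M := K * (|v p| + (max M |u 0|) * σoo))
    · rw [Real.volume_Ioo]; exact ENNReal.ofReal_ne_top
    · exact hfmeas.aestronglyMeasurable
    · rw [ae_restrict_iff' measurableSet_Ioo]
      exact Eventually.of_forall (fun y hy => hquot y _ (hvR y hy.1 hy.2))
  have hIq : IntervalIntegrable (fun s => v s / a s) volume 0 q := by
    rw [intervalIntegrable_iff_integrableOn_Ioc_of_le h0q,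
      ← Ioc_union_Ioc_eq_Ioc hp hpq.le]
    apply IntegrableOn.union
    · exact (intervalIntegrable_iff_integrableOn_Ioc_of_le hp).mp hInt
    · rw [← Ioo_union_right hpq]
      apply hIooInt.union
      unfold IntegrableOn
      rw [Measure.restrict_eq_zero.mpr (measure_singleton q)]
      exact integrable_zero_measure
  have huM : ∀ τ, p ≤ τ → τ ≤ q → |u τ| ≤ M := key q hpq.le le_rfl hIq
  have hvW : ∀ x, p < x → x < q → |v x| ≤ |v p| + M * σoo := fun x h1 h2 =>
    vbound M hM0 x h1 h2 (fun y hy1 hy2 => huM y hy1.le (hy2.trans h2.le))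
  refine ⟨hIq, ?_⟩
  -- Δu bound
  have hIpq : IntervalIntegrable (fun s => v s / a s) volume p q := by
    apply hIq.mono_set
    rw [uIcc_of_le h0q, uIcc_of_le hpq.le]
    exact Set.Icc_subset_Icc hp le_rfl
  have hΔu_eq : u q - u p = ∫ s in p..q, v s / a s := by
    rw [hequ q, hequ p]
    have hadd := intervalIntegral.integral_add_adjacent_intervals hInt hIpq
    linarith [hadd]
  have hWnn : 0 ≤ |v p| + M * σoo := by positivity
  have hΔu : |u q - u p| ≤ (K * (q-p)) * (|v p| + M * σoo) := by
    rw [hΔu_eq, intervalIntegral.integral_of_le hpq.le,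
      setIntegral_congr_set (Ioo_ae_eq_Ioc (a := p) (b := q)).symm]
    have hvol : volume (Set.Ioo p q) < ⊤ := by
      rw [Real.volume_Ioo]; exact ENNReal.ofReal_lt_top
    have hb : ∀ y ∈ Set.Ioo p q, |v y / a y| ≤ K * (|v p| + M * σoo) := by
      intro y hy
      have h := hquot y _ (hvW y hy.1 hy.2)
      rwa [Real.norm_eq_abs] at h
    have hsb := setInt_bound measurableSet_Ioo hvol hb
    have hvtr : (volume (Set.Ioo p q)).toReal = q - p := by
      rw [Real.volume_Ioo, ENNReal.toReal_ofReal (by linarith)]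
    rw [hvtr] at hsb
    calc |∫ s in Set.Ioo p q, v s / a s| ≤ K * (|v p| + M * σoo) * (q-p) := hsb
      _ = (K * (q-p)) * (|v p| + M * σoo) := by ring
  -- integrability of u for the measures
  have hbb : ∀ᵐ (y : ℝ) ∂(μp.restrict (Set.Ioo p q)), ‖u y‖ ≤ M := by
    rw [ae_restrict_iff' measurableSet_Ioo]
    exact Eventually.of_forall (fun y hy => by
      rw [Real.norm_eq_abs]; exact huM y hy.1.le hy.2.le)
  have hbbm : ∀ᵐ (y : ℝ) ∂(μm.restrict (Set.Ioo p q)), ‖u y‖ ≤ M := by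
    rw [ae_restrict_iff' measurableSet_Ioo]
    exact Eventually.of_forall (fun y hy => by
      rw [Real.norm_eq_abs]; exact huM y hy.1.le hy.2.le)
  have hIup : IntegrableOn u (Set.Ioo p q) μp :=
    Measure.integrableOn_of_bounded (ne_of_lt hfpoo) hu.aestronglyMeasurable hbb
  have hIum : IntegrableOn u (Set.Ioo p q) μm :=
    Measure.integrableOn_of_bounded (ne_of_lt hfmoo) hu.aestronglyMeasurable hbbm
  have hIupS : IntegrableOn u {q} μp := by
    apply Measure.integrableOn_of_bounded (ne_of_lt hfpsing) hu.aestronglyMeasurable (M := |u q|)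
    rw [ae_restrict_iff' (measurableSet_singleton q)]
    exact Eventually.of_forall (fun y hy => by
      rw [Set.mem_singleton_iff] at hy; rw [hy, Real.norm_eq_abs])
  have hIumS : IntegrableOn u {q} μm := by
    apply Measure.integrableOn_of_bounded (ne_of_lt hfmsing) hu.aestronglyMeasurable (M := |u q|)
    rw [ae_restrict_iff' (measurableSet_singleton q)]
    exact Eventually.of_forall (fun y hy => by
      rw [Set.mem_singleton_iff] at hy; rw [hy, Real.norm_eq_abs])
  have hdisj : Disjoint (Set.Ioo p q) ({q} : Set ℝ) :=
    Set.disjoint_singleton_right.mpr (fun h => lt_irrefl q h.2)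
  have hsplitp : ∫ x in Set.Ioc p q, u x ∂μp
      = (∫ x in Set.Ioo p q, u x ∂μp) + (μp {q}).toReal * u q := by
    rw [← Ioo_union_right hpq,
      setIntegral_union hdisj (measurableSet_singleton q) hIup hIupS,
      integral_singleton]
    simp [mul_comm, Measure.real]
  have hsplitm : ∫ x in Set.Ioc p q, u x ∂μm
      = (∫ x in Set.Ioo p q, u x ∂μm) + (μm {q}).toReal * u q := by
    rw [← Ioo_union_right hpq,
      setIntegral_union hdisj (measurableSet_singleton q) hIum hIumS,
      integral_singleton]
    simp [mul_comm, Measure.real]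
  obtain ⟨w, hw⟩ : ∃ w:ℝ,
      w = v p + ((∫ x in Set.Ioo p q, u x ∂μp) - (∫ x in Set.Ioo p q, u x ∂μm)) := ⟨_, rfl⟩
  have hvq : v q = w + ((μp {q}).toReal - (μm {q}).toReal) * u q := by
    have h := heqv p q hpq.le
    rw [hsplitp, hsplitm] at h
    rw [hw]; linear_combination h
  have hΔw : |w - v p| ≤ M * σoo := by
    have h0 : w - v p = (∫ x in Set.Ioo p q, u x ∂μp) - (∫ x in Set.Ioo p q, u x ∂μm) := by
      rw [hw]; ring
    have h1 : |∫ x in Set.Ioo p q, u x ∂μp| ≤ M * (μp (Set.Ioo p q)).toReal :=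
      setInt_bound measurableSet_Ioo hfpoo (fun y hy => huM y hy.1.le hy.2.le)
    have h2 : |∫ x in Set.Ioo p q, u x ∂μm| ≤ M * (μm (Set.Ioo p q)).toReal :=
      setInt_bound measurableSet_Ioo hfmoo (fun y hy => huM y hy.1.le hy.2.le)
    have h3 := abs_sub (∫ x in Set.Ioo p q, u x ∂μp) (∫ x in Set.Ioo p q, u x ∂μm)
    have h4 : M * σoo = M * (μp (Set.Ioo p q)).toReal + M * (μm (Set.Ioo p q)).toReal := by
      rw [hσoo]; ring
    rw [h0]; linarith
  -- step 1
  obtain ⟨ν₁, hν₁⟩ : ∃ r:ℝ, r = ω * K * (q-p) := ⟨_, rfl⟩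
  obtain ⟨ν₂, hν₂⟩ : ∃ r:ℝ, r = σoo / ω := ⟨_, rfl⟩
  have hν₂0 : 0 ≤ ν₂ := by rw [hν₂]; exact div_nonneg hσoo0 hω.le
  have hν₁0' : 0 ≤ ν₁ := by rw [hν₁]; exact hν₁0
  have hνsum : ν₁ + ν₂ ≤ δ := by rw [hν₁, hν₂]; exact hsum
  have hstep1 : ω^2 * (u q)^2 + w^2 ≤
      (ω^2 * (u p)^2 + (v p)^2) * (1 + (1+10*δ)*(ν₁+ν₂)) := by
    apply step1_algebra (W := |v p| + M * σoo) hω hδ0 hδ2 hν₁0' hν₂0 hνsum hM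
    · rw [hν₂]
      rw [show ω * (σoo / ω) = σoo / ω * ω from by ring, div_mul_cancel₀ _ hω']
    · have e1 : ν₁/ω = K * (q-p) := by
        rw [hν₁, mul_comm ω K, mul_assoc, mul_comm ω (q-p), ← mul_assoc,
          mul_div_assoc, div_self hω', mul_one]
      rw [e1]
      exact hΔu
    · have e2 : ν₂ * (ω * M) = M * σoo := by
        rw [hν₂, show σoo / ω * (ω * M) = σoo / ω * ω * M from by ring,
          div_mul_cancel₀ _ hω']
        ring
      rw [e2]
      exact hΔw
  -- step 2 (atom at q)
  obtain ⟨sAt, hsAt⟩ : ∃ r:ℝ, r = ((μp {q}).toReal + (μm {q}).toReal) / ω := ⟨_, rfl⟩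
  have hsAt0 : 0 ≤ sAt := by
    rw [hsAt]; positivity
  have hjump : ω^2 * (u q)^2 + (v q)^2 ≤ (ω^2 * (u q)^2 + w^2) * Real.exp sAt := by
    have hrs : |((μp {q}).toReal - (μm {q}).toReal)/ω| ≤ sAt := by
      rw [hsAt, abs_div, abs_of_pos hω]
      have n1 : 0 ≤ (μp {q}).toReal := ENNReal.toReal_nonneg
      have n2 : 0 ≤ (μm {q}).toReal := ENNReal.toReal_nonneg
      gcongr
      rw [abs_sub_le_iff]
      constructor <;> linarith
    have h := jumpStep (x := ω * u q) (w := w)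
      (r := ((μp {q}).toReal - (μm {q}).toReal)/ω) (s := sAt) hrs
    have e1 : ω * u q * (((μp {q}).toReal - (μm {q}).toReal)/ω)
        = ((μp {q}).toReal - (μm {q}).toReal) * u q := by
      field_simp
    rw [e1, ← hvq] at h
    have e2 : (ω * u q)^2 = ω^2 * (u q)^2 := by ring
    rw [e2] at h
    exact h
  -- combine
  have hEp0 : 0 ≤ ω^2 * (u p)^2 + (v p)^2 := by positivity
  have hIocp : (μp (Set.Ioc p q)).toReal = (μp (Set.Ioo p q)).toReal + (μp {q}).toReal := by
    rw [← Ioo_union_right hpq, measure_union hdisj (measurableSet_singleton q)]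
    exact ENNReal.toReal_add (ne_of_lt hfpoo) (ne_of_lt hfpsing)
  have hIocm : (μm (Set.Ioc p q)).toReal = (μm (Set.Ioo p q)).toReal + (μm {q}).toReal := by
    rw [← Ioo_union_right hpq, measure_union hdisj (measurableSet_singleton q)]
    exact ENNReal.toReal_add (ne_of_lt hfmoo) (ne_of_lt hfmsing)
  have etarget : ω*K*(q-p) + ((μp (Set.Ioc p q)).toReal + (μm (Set.Ioc p q)).toReal)/ω
      = ν₁ + ν₂ + sAt := by
    rw [hν₁, hν₂, hσoo, hsAt, hIocp, hIocm]; ring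
  have hexpineq : (1+10*δ)*(ν₁+ν₂) + sAt ≤ (1+10*δ)*(ν₁+ν₂+sAt) := by
    nlinarith [mul_nonneg (by linarith : (0:ℝ) ≤ 10*δ) hsAt0]
  calc ω^2 * u q ^2 + v q ^2 ≤ (ω^2 * (u q)^2 + w^2) * Real.exp sAt := hjump
    _ ≤ ((ω^2 * (u p)^2 + (v p)^2) * (1 + (1+10*δ)*(ν₁+ν₂))) * Real.exp sAt :=
        mul_le_mul_of_nonneg_right hstep1 (Real.exp_pos _).le
    _ ≤ ((ω^2 * (u p)^2 + (v p)^2) * Real.exp ((1+10*δ)*(ν₁+ν₂))) * Real.exp sAt := by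
        apply mul_le_mul_of_nonneg_right _ (Real.exp_pos _).le
        apply mul_le_mul_of_nonneg_left _ hEp0
        have := Real.add_one_le_exp ((1+10*δ)*(ν₁+ν₂))
        linarith
    _ = (ω^2 * (u p)^2 + (v p)^2) * Real.exp ((1+10*δ)*(ν₁+ν₂) + sAt) := by
        rw [Real.exp_add]; ring
    _ ≤ (ω^2 * (u p)^2 + (v p)^2) *
        Real.exp ((1 + 10*δ) * (ω*K*(q-p) + ((μp (Set.Ioc p q)).toReal + (μm (Set.Ioc p q)).toReal)/ω)) := by
        apply mul_le_mul_of_nonneg_left _ hEp0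
        apply Real.exp_le_exp.mpr
        rw [etarget]
        exact hexpineq

lemma measure_shrink_right (ν : Measure ℝ) (hfin : FiniteOnBounded ν) (T : ℝ) :
    Tendsto (fun n : ℕ => ν (Set.Ioo T (T + 1/((n:ℝ)+1)))) atTop (𝓝 0) := by
  have hs : ∀ n : ℕ, NullMeasurableSet (Set.Ioo T (T + 1/((n:ℝ)+1))) ν :=
    fun n => measurableSet_Ioo.nullMeasurableSet
  have hm : Antitone (fun n : ℕ => Set.Ioo T (T + 1/((n:ℝ)+1))) := by
    intro m n hmn
    apply Set.Ioo_subset_Ioo le_rfl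
    have hmn' : (m:ℝ)+1 ≤ (n:ℝ)+1 := by exact_mod_cast Nat.succ_le_succ hmn
    have h2 : 1/((n:ℝ)+1) ≤ 1/((m:ℝ)+1) := one_div_le_one_div_of_le (by positivity) hmn'
    linarith
  have hf : ∃ n : ℕ, ν (Set.Ioo T (T + 1/((n:ℝ)+1))) ≠ ⊤ :=
    ⟨0, (hfin _ (Metric.isBounded_Ioo _ _)).ne⟩
  have hint : ⋂ n : ℕ, Set.Ioo T (T + 1/((n:ℝ)+1)) = ∅ := by
    ext x
    simp only [Set.mem_empty_iff_false, iff_false]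
    intro h
    rw [Set.mem_iInter] at h
    have h0 := h 0
    rw [Set.mem_Ioo] at h0
    obtain ⟨n, hn⟩ := exists_nat_one_div_lt (show 0 < x - T by linarith [h0.1, h0.2])
    have h2 := h n
    rw [Set.mem_Ioo] at h2
    push_cast at hn
    linarith [h2.2]
  have := tendsto_measure_iInter_atTop hs hm hf
  rwa [hint, measure_empty] at this

lemma measure_shrink_left (ν : Measure ℝ) (hfin : FiniteOnBounded ν) (T : ℝ) :
    Tendsto (fun n : ℕ => ν (Set.Ioo (T - 1/((n:ℝ)+1)) T)) atTop (𝓝 0) := by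
  have hs : ∀ n : ℕ, NullMeasurableSet (Set.Ioo (T - 1/((n:ℝ)+1)) T) ν :=
    fun n => measurableSet_Ioo.nullMeasurableSet
  have hm : Antitone (fun n : ℕ => Set.Ioo (T - 1/((n:ℝ)+1)) T) := by
    intro m n hmn
    apply Set.Ioo_subset_Ioo _ le_rfl
    have hmn' : (m:ℝ)+1 ≤ (n:ℝ)+1 := by exact_mod_cast Nat.succ_le_succ hmn
    have h2 : 1/((n:ℝ)+1) ≤ 1/((m:ℝ)+1) := one_div_le_one_div_of_le (by positivity) hmn'
    linarith
  have hf : ∃ n : ℕ, ν (Set.Ioo (T - 1/((n:ℝ)+1)) T) ≠ ⊤ :=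
    ⟨0, (hfin _ (Metric.isBounded_Ioo _ _)).ne⟩
  have hint : ⋂ n : ℕ, Set.Ioo (T - 1/((n:ℝ)+1)) T = ∅ := by
    ext x
    simp only [Set.mem_empty_iff_false, iff_false]
    intro h
    rw [Set.mem_iInter] at h
    have h0 := h 0
    rw [Set.mem_Ioo] at h0
    obtain ⟨n, hn⟩ := exists_nat_one_div_lt (show 0 < T - x by linarith [h0.1, h0.2])
    have h2 := h n
    rw [Set.mem_Ioo] at h2
    push_cast at hn
    linarith [h2.1]
  have := tendsto_measure_iInter_atTop hs hm hf
  rwa [hint, measure_empty] at this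

lemma small_interval_pick {μp μm : Measure ℝ} (hfp : FiniteOnBounded μp)
    (hfm : FiniteOnBounded μm) {ω K δ ε : ℝ} (hω : 0 < ω) (hK : 0 < K) (hδ : 0 < δ)
    (hε : 0 < ε) (T : ℝ) (side : Bool) :
    ∃ d : ℝ, 0 < d ∧ d ≤ ε ∧
      ω*K*d + ((μp (Set.Ioo (if side then T else T - d) (if side then T + d else T))).toReal
        + (μm (Set.Ioo (if side then T else T - d) (if side then T + d else T))).toReal)/ω ≤ δ := by
  have hc : (0:ℝ≥0∞) < ENNReal.ofReal (ω*δ/4) := ENNReal.ofReal_pos.mpr (by positivity)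
  have h1 : ∀ᶠ n : ℕ in atTop,
      μp (Set.Ioo (if side then T else T - 1/((n:ℝ)+1))
        (if side then T + 1/((n:ℝ)+1) else T)) < ENNReal.ofReal (ω*δ/4) := by
    cases side
    · simpa using (measure_shrink_left μp hfp T).eventually_lt_const hc
    · simpa using (measure_shrink_right μp hfp T).eventually_lt_const hc
  have h2 : ∀ᶠ n : ℕ in atTop,
      μm (Set.Ioo (if side then T else T - 1/((n:ℝ)+1))
        (if side then T + 1/((n:ℝ)+1) else T)) < ENNReal.ofReal (ω*δ/4) := by
    cases side
    · simpa using (measure_shrink_left μm hfm T).eventually_lt_const hc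
    · simpa using (measure_shrink_right μm hfm T).eventually_lt_const hc
  have h3 : ∀ᶠ n : ℕ in atTop, 1/((n:ℝ)+1) ≤ min ε (δ/(2*ω*K)) := by
    obtain ⟨N, hN⟩ := exists_nat_one_div_lt (show 0 < min ε (δ/(2*ω*K)) by
      apply lt_min hε; positivity)
    rw [eventually_atTop]
    refine ⟨N, fun n hn => ?_⟩
    have hmn' : (N:ℝ)+1 ≤ (n:ℝ)+1 := by exact_mod_cast Nat.succ_le_succ hn
    have h2 : 1/((n:ℝ)+1) ≤ 1/((N:ℝ)+1) := one_div_le_one_div_of_le (by positivity) hmn'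
    linarith
  obtain ⟨n, hn1, hn2, hn3⟩ := (h1.and (h2.and h3)).exists
  refine ⟨1/((n:ℝ)+1), by positivity, le_trans hn3 (min_le_left _ _), ?_⟩
  have e1 : (μp (Set.Ioo (if side then T else T - 1/((n:ℝ)+1))
      (if side then T + 1/((n:ℝ)+1) else T))).toReal ≤ ω*δ/4 :=
    ENNReal.toReal_le_of_le_ofReal (by positivity) hn1.le
  have e2 : (μm (Set.Ioo (if side then T else T - 1/((n:ℝ)+1))
      (if side then T + 1/((n:ℝ)+1) else T))).toReal ≤ ω*δ/4 :=
    ENNReal.toReal_le_of_le_ofReal (by positivity) hn2.le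
  have e3 : ω*K*(1/((n:ℝ)+1)) ≤ δ/2 := by
    have h4 : 1/((n:ℝ)+1) ≤ δ/(2*ω*K) := le_trans hn3 (min_le_right _ _)
    have h5 := mul_le_mul_of_nonneg_left h4 (by positivity : (0:ℝ) ≤ ω*K)
    have h6 : ω*K*(δ/(2*ω*K)) = δ/2 := by field_simp
    linarith
  have e4 : ((μp (Set.Ioo (if side then T else T - 1/((n:ℝ)+1))
      (if side then T + 1/((n:ℝ)+1) else T))).toReal
      + (μm (Set.Ioo (if side then T else T - 1/((n:ℝ)+1))
      (if side then T + 1/((n:ℝ)+1) else T))).toReal)/ω ≤ δ/2 := by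
    rw [div_le_iff₀ hω]
    nlinarith
  linarith

/-- Energy estimate with arbitrary weight `ω`. -/
theorem energy_estimate_with_weight
    (ρ : MeasureTheory.Measure ℝ) (hρ0 : ρ ≠ 0) (hρfin : unifE ρ < ⊤)
    (hρper : ∃ p : ℝ, IsPeriod ρ p)
    (a : ℝ → ℝ) (μp μm : MeasureTheory.Measure ℝ) (hAM : AM ρ a μp μm)
    (u v : ℝ → ℝ) (hsol : IsSolution0 a μp μm u v)
    (ω : ℝ) (hω : 0 < ω) :
    ∀ t : ℝ, 0 < t →
      (ω ^ 2 * u t ^ 2 + v t ^ 2 ≤ (ω ^ 2 * u 0 ^ 2 + v 0 ^ 2) *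
        Real.exp (ω * supNorm (fun x => 1 / a x) * t +
          (1 / ω) * ((μp + μm) (Set.Ioc 0 t)).toReal)) ∧
      (ω ^ 2 * u t ^ 2 + v t ^ 2 ≤ (ω ^ 2 * u 0 ^ 2 + v 0 ^ 2) *
        Real.exp (ω * supNorm (fun x => 1 / a x) * t +
          (1 / ω) * (unifNorm (μp + μm) * (t + 1)))) := by
  intro t ht
  -- basic facts about a
  have hbb : BddBelow (Set.range a) := by
    by_contra hcon
    have h0 : ⨅ x : ℝ, a x = 0 := Real.iInf_of_not_bddBelow hcon
    have hpos := hAM.inf_pos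
    rw [h0] at hpos
    exact lt_irrefl 0 hpos
  have hax : ∀ x, 0 < a x := fun x =>
    lt_of_lt_of_le hAM.inf_pos (ciInf_le hbb x)
  have hKbdd : BddAbove (Set.range fun x => 1 / a x) := by
    refine ⟨1 / (⨅ x : ℝ, a x), ?_⟩
    rintro y ⟨x, rfl⟩
    exact one_div_le_one_div_of_le hAM.inf_pos (ciInf_le hbb x)
  have haK : ∀ x, 1 / a x ≤ supNorm (fun x => 1 / a x) := fun x =>
    le_csSup hKbdd ⟨x, rfl⟩
  have hK0 : 0 < supNorm (fun x => 1 / a x) :=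
    lt_of_lt_of_le (one_div_pos.mpr (hax 0)) (haK 0)
  obtain ⟨K, hKdef⟩ : ∃ r : ℝ, r = supNorm (fun x => 1 / a x) := ⟨_, rfl⟩
  rw [← hKdef] at haK hK0 ⊢
  have hω' : ω ≠ 0 := ne_of_gt hω
  -- Φ
  obtain ⟨Φ, hΦ⟩ : ∃ F : ℝ → ℝ, F = fun s =>
      ω*K*s + ((μp (Set.Ioc 0 s)).toReal + (μm (Set.Ioc 0 s)).toReal)/ω := ⟨_, rfl⟩
  have hfinIoc : ∀ (ν : Measure ℝ), FiniteOnBounded ν → ∀ x y : ℝ, ν (Set.Ioc x y) < ⊤ :=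
    fun ν hν x y => hν _ (Metric.isBounded_Ioc x y)
  have hPhiadd : ∀ p q : ℝ, 0 ≤ p → p ≤ q →
      Φ q = Φ p + (ω*K*(q-p) + ((μp (Set.Ioc p q)).toReal + (μm (Set.Ioc p q)).toReal)/ω) := by
    intro p q hp hpq
    have hdisj : Disjoint (Set.Ioc (0:ℝ) p) (Set.Ioc p q) := Set.Ioc_disjoint_Ioc_of_le le_rfl
    have hunion : Set.Ioc (0:ℝ) q = Set.Ioc 0 p ∪ Set.Ioc p q :=
      (Set.Ioc_union_Ioc_eq_Ioc hp hpq).symm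
    have hmp : (μp (Set.Ioc 0 q)).toReal
        = (μp (Set.Ioc 0 p)).toReal + (μp (Set.Ioc p q)).toReal := by
      rw [hunion, measure_union hdisj measurableSet_Ioc]
      exact ENNReal.toReal_add (ne_of_lt (hfinIoc μp hAM.finp 0 p))
        (ne_of_lt (hfinIoc μp hAM.finp p q))
    have hmm : (μm (Set.Ioc 0 q)).toReal
        = (μm (Set.Ioc 0 p)).toReal + (μm (Set.Ioc p q)).toReal := by
      rw [hunion, measure_union hdisj measurableSet_Ioc]
      exact ENNReal.toReal_add (ne_of_lt (hfinIoc μm hAM.finm 0 p))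
        (ne_of_lt (hfinIoc μm hAM.finm p q))
    rw [hΦ]
    simp only
    rw [hmp, hmm]
    ring
  -- the main estimate for each δ
  have main : ∀ δ : ℝ, 0 < δ → δ ≤ 1/2 →
      ω^2 * u t ^2 + v t ^2 ≤ (ω^2 * u 0 ^2 + v 0 ^2) * Real.exp ((1+10*δ) * Φ t) := by
    intro δ hδ0 hδ2
    set Q : ℝ → Prop := fun s =>
      IntervalIntegrable (fun s' => v s' / a s') volume 0 s ∧
        ω^2 * u s ^2 + v s ^2 ≤ (ω^2 * u 0 ^2 + v 0 ^2) * Real.exp ((1+10*δ) * Φ s) with hQdef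
    have hQ0 : Q 0 := by
      constructor
      · exact IntervalIntegrable.refl
      · have hΦ0 : Φ 0 = 0 := by rw [hΦ]; simp
        rw [hΦ0]
        simp
    have hstep : ∀ p q : ℝ, 0 ≤ p → p < q → Q p →
        (ω*K*(q-p) + ((μp (Set.Ioo p q)).toReal + (μm (Set.Ioo p q)).toReal)/ω ≤ δ) → Q q := by
      intro p q hp hpq hQp hsm
      obtain ⟨hI, hE⟩ := onePiece hsol.meas_u hsol.meas_v hAM.meas_a hax haK hsol.eq_u
        hsol.eq_v hAM.finp hAM.finm hω hδ0 hδ2 hp hpq hQp.1 hsm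
      refine ⟨hI, ?_⟩
      have hEp0 : (0:ℝ) ≤ ω^2 * u p ^2 + v p ^2 := by positivity
      calc ω^2 * u q ^2 + v q ^2
          ≤ (ω^2 * u p ^2 + v p ^2) * Real.exp ((1 + 10*δ) *
            (ω*K*(q-p) + ((μp (Set.Ioc p q)).toReal + (μm (Set.Ioc p q)).toReal)/ω)) := hE
        _ ≤ ((ω^2 * u 0 ^2 + v 0 ^2) * Real.exp ((1+10*δ) * Φ p)) * Real.exp ((1 + 10*δ) *
            (ω*K*(q-p) + ((μp (Set.Ioc p q)).toReal + (μm (Set.Ioc p q)).toReal)/ω)) :=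
            mul_le_mul_of_nonneg_right hQp.2 (Real.exp_pos _).le
        _ = (ω^2 * u 0 ^2 + v 0 ^2) * Real.exp ((1+10*δ) * Φ q) := by
            rw [hPhiadd p q hp hpq.le, mul_assoc, ← Real.exp_add]
            congr 1
            ring
    by_contra hcon
    have hBne : {s : ℝ | s ∈ Set.Icc 0 t ∧ ¬ Q s}.Nonempty := by
      refine ⟨t, ⟨le_of_lt ht, le_rfl⟩, ?_⟩
      intro hQt
      exact hcon hQt.2
    set B := {s : ℝ | s ∈ Set.Icc 0 t ∧ ¬ Q s} with hBdef
    have hbddB : BddBelow B := ⟨0, fun b hb => hb.1.1⟩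
    set T := sInf B with hTdef
    have hT0 : 0 ≤ T := le_csInf hBne (fun b hb => hb.1.1)
    have hTt : T ≤ t := by
      obtain ⟨b0, hb0⟩ := hBne
      exact le_trans (csInf_le hbddB hb0) hb0.1.2
    have hQbelow : ∀ s, 0 ≤ s → s < T → Q s := by
      intro s h1 h2
      by_contra hq
      have : T ≤ s := csInf_le hbddB ⟨⟨h1, le_trans h2.le hTt⟩, hq⟩
      linarith
    have hQT : Q T := by
      rcases eq_or_lt_of_le hT0 with h | h
      · rw [← h]; exact hQ0
      · obtain ⟨d, hd0, hdT, hds⟩ := small_interval_pick hAM.finp hAM.finm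
          hω hK0 hδ0 h T false
      -- interval is Ioo (T - d) T
        simp only [if_neg (Bool.false_ne_true)] at hds
        have hp0 : 0 ≤ T - d := by linarith
        have hQp : Q (T - d) := by
          rcases eq_or_lt_of_le hp0 with h2 | h2
          · rw [← h2]; exact hQ0
          · exact hQbelow (T - d) hp0 (by linarith)
        exact hstep (T - d) T hp0 (by linarith) hQp (by linarith [hds])
    rcases eq_or_lt_of_le hTt with h | h
    · obtain ⟨b0, hb0⟩ := hBne
      have hb0T : T ≤ b0 := csInf_le hbddB hb0
      have : b0 = T := le_antisymm (by rw [h]; exact hb0.1.2) hb0T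
      rw [this] at hb0
      exact hb0.2 hQT
    · obtain ⟨d, hd0, hdt, hds⟩ := small_interval_pick hAM.finp hAM.finm
        hω hK0 hδ0 (show (0:ℝ) < t - T by linarith) T true
      simp at hds
      have hgood : ∀ s, T < s → s ≤ T + d → Q s := by
        intro s hs1 hs2
        apply hstep T s hT0 hs1 hQT
        have hsub : Set.Ioo T s ⊆ Set.Ioo T (T + d) := Set.Ioo_subset_Ioo le_rfl hs2
        have m1 : (μp (Set.Ioo T s)).toReal ≤ (μp (Set.Ioo T (T+d))).toReal :=
          ENNReal.toReal_mono (ne_of_lt (hAM.finp _ (Metric.isBounded_Ioo _ _)))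
            (measure_mono hsub)
        have m2 : (μm (Set.Ioo T s)).toReal ≤ (μm (Set.Ioo T (T+d))).toReal :=
          ENNReal.toReal_mono (ne_of_lt (hAM.finm _ (Metric.isBounded_Ioo _ _)))
            (measure_mono hsub)
        have e1 : ω*K*(s - T) ≤ ω*K*d := by
          apply mul_le_mul_of_nonneg_left (by linarith) (by positivity)
        have e2 : ((μp (Set.Ioo T s)).toReal + (μm (Set.Ioo T s)).toReal)/ω
            ≤ ((μp (Set.Ioo T (T+d))).toReal + (μm (Set.Ioo T (T+d))).toReal)/ω := by
          exact (div_le_div_iff_of_pos_right hω).mpr (by linarith)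
        linarith [hds, e1, e2, m1, m2]
      have hlow : ∀ b ∈ B, T + d ≤ b := by
        intro b hb
        by_contra hbc
        push_neg at hbc
        have hbT : T ≤ b := csInf_le hbddB hb
        rcases eq_or_lt_of_le hbT with h2 | h2
        · rw [h2] at hQT; exact hb.2 hQT
        · exact hb.2 (hgood b h2 (by linarith))
      have : T + d ≤ T := le_csInf hBne hlow
      linarith
  -- pass to the limit δ → 0⁺
  have hlimit : ω^2 * u t ^2 + v t ^2 ≤ (ω^2 * u 0 ^2 + v 0 ^2) * Real.exp (Φ t) := by
    have hcont : Tendsto (fun δ : ℝ => (ω^2 * u 0 ^2 + v 0 ^2) * Real.exp ((1+10*δ) * Φ t))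
        (𝓝[>] 0) (𝓝 ((ω^2 * u 0 ^2 + v 0 ^2) * Real.exp ((1+10*(0:ℝ)) * Φ t))) := by
      apply Tendsto.mono_left _ nhdsWithin_le_nhds
      exact Continuous.tendsto (by continuity) 0
    have heq0 : (1+10*(0:ℝ)) * Φ t = Φ t := by ring
    rw [heq0] at hcont
    apply ge_of_tendsto hcont
    filter_upwards [Ioc_mem_nhdsGT_of_mem (Set.left_mem_Ico.mpr (by norm_num : (0:ℝ) < 1/2))]
      with δ hδ
    exact main δ hδ.1 hδ.2
  -- convert Φ t to the goal form
  have hσ : ((μp + μm) (Set.Ioc 0 t)).toReal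
      = (μp (Set.Ioc 0 t)).toReal + (μm (Set.Ioc 0 t)).toReal := by
    rw [Measure.add_apply]
    exact ENNReal.toReal_add (ne_of_lt (hfinIoc μp hAM.finp 0 t))
      (ne_of_lt (hfinIoc μm hAM.finm 0 t))
  have hgoal1 : ω ^ 2 * u t ^ 2 + v t ^ 2 ≤ (ω ^ 2 * u 0 ^ 2 + v 0 ^ 2) *
      Real.exp (ω * K * t + (1 / ω) * ((μp + μm) (Set.Ioc 0 t)).toReal) := by
    have e1 : ω * K * t + (1 / ω) * ((μp + μm) (Set.Ioc 0 t)).toReal = Φ t := by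
      rw [hσ, hΦ]
      simp only
      ring
    rw [e1]
    exact hlimit
  constructor
  · exact hgoal1
  · have hE00 : (0:ℝ) ≤ ω ^ 2 * u 0 ^ 2 + v 0 ^ 2 := by positivity
    refine le_trans hgoal1 (mul_le_mul_of_nonneg_left (Real.exp_le_exp.mpr ?_) hE00)
    have hunif : ((μp + μm) (Set.Ioc 0 t)).toReal ≤ unifNorm (μp + μm) * (t + 1) := by
      set ν := μp + μm with hν
      have hn : ∀ m : ℕ, ν (Set.Ioc (0:ℝ) (m:ℝ)) ≤ (m : ℝ≥0∞) * unifE ν := by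
        intro m
        induction m with
        | zero => simp
        | succ k ih =>
          have hu1 : Set.Ioc (0:ℝ) ((k+1:ℕ):ℝ) = Set.Ioc (0:ℝ) (k:ℝ) ∪ Set.Ioc (k:ℝ) ((k:ℝ)+1) := by
            rw [Set.Ioc_union_Ioc_eq_Ioc (by positivity) (by linarith)]
            push_cast
            ring_nf
          rw [hu1]
          calc ν (Set.Ioc (0:ℝ) (k:ℝ) ∪ Set.Ioc (k:ℝ) ((k:ℝ)+1))
              ≤ ν (Set.Ioc (0:ℝ) (k:ℝ)) + ν (Set.Ioc (k:ℝ) ((k:ℝ)+1)) := measure_union_le _ _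
            _ ≤ (k : ℝ≥0∞) * unifE ν + unifE ν := by
                apply add_le_add ih
                exact le_iSup (fun r : ℝ => ν (Set.Ioc r (r+1))) (k:ℝ)
            _ = ((k+1:ℕ) : ℝ≥0∞) * unifE ν := by
                push_cast
                rw [add_mul, one_mul]
      have h1 : ν (Set.Ioc 0 t) ≤ ((⌈t⌉₊ : ℕ) : ℝ≥0∞) * unifE ν :=
        le_trans (measure_mono (Set.Ioc_subset_Ioc le_rfl (Nat.le_ceil t))) (hn ⌈t⌉₊)
      have hfin2 : ((⌈t⌉₊ : ℕ) : ℝ≥0∞) * unifE ν ≠ ⊤ :=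
        ENNReal.mul_ne_top (ENNReal.natCast_ne_top _) (ne_of_lt hAM.unif_lt_top)
      have h2 : (ν (Set.Ioc 0 t)).toReal ≤ (((⌈t⌉₊ : ℕ) : ℝ≥0∞) * unifE ν).toReal :=
        ENNReal.toReal_mono hfin2 h1
      have h3 : (((⌈t⌉₊ : ℕ) : ℝ≥0∞) * unifE ν).toReal = (⌈t⌉₊ : ℝ) * unifNorm ν := by
        rw [ENNReal.toReal_mul]
        simp [unifNorm]
      have h4 : (⌈t⌉₊ : ℝ) ≤ t + 1 := (Nat.ceil_lt_add_one ht.le).le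
      have h5 : 0 ≤ unifNorm ν := ENNReal.toReal_nonneg
      calc (ν (Set.Ioc 0 t)).toReal ≤ (⌈t⌉₊ : ℝ) * unifNorm ν := by rw [← h3]; exact h2
        _ ≤ (t+1) * unifNorm ν := mul_le_mul_of_nonneg_right h4 h5
        _ = unifNorm ν * (t+1) := by ring
    have := mul_le_mul_of_nonneg_left hunif (by positivity : (0:ℝ) ≤ 1/ω)
    linarith
end
end

section
/- Control of the quasi-derivative by the solution: Let (a, μ) ∈ AM(ℝ) (with respect to some nonzero nonnegative periodic Borel measure ρ with ‖ρ‖_unif < ∞), let (u, v) be a solution of H_{a,μ} u = 0, and let r > 0. Set C := max{ 2‖a‖_∞ / r , ‖μ‖_unif / 2 } + ⌈r⌉·‖μ‖_unif. Then for every α ∈ ℝ, writing I := (α, α + r], one has sup_{t ∈ I} |v(t)| ≤ C · sup_{t ∈ I} |u(t)|. -/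
open MeasureTheory Set Filter

noncomputable section

open Topology
set_option maxHeartbeats 1000000
section AuxLemmas

lemma unifNorm_nonneg (ν : Measure ℝ) : 0 ≤ unifNorm ν := ENNReal.toReal_nonneg

lemma measure_Ioc_le_unifE (ν : Measure ℝ) {s t : ℝ} (h : t ≤ s + 1) :
    ν (Ioc s t) ≤ unifE ν :=
  le_trans (measure_mono (Ioc_subset_Ioc_right h))
    (le_iSup (fun x => ν (Ioc x (x + 1))) s)

lemma measure_Ioc_le_nsmul (ν : Measure ℝ) (s t : ℝ) (n : ℕ) (h : t ≤ s + n) :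
    ν (Ioc s t) ≤ (n : ENNReal) * unifE ν := by
  have hsub : Ioc s t ⊆ ⋃ k ∈ Finset.range n, Ioc (s + k) (s + k + 1) := by
    intro x hx
    have hx1 : 0 < x - s := by linarith [hx.1]
    have hx2 : x - s ≤ (n : ℝ) := by linarith [hx.2]
    set m : ℕ := ⌈x - s⌉₊ with hm
    have hm1 : 1 ≤ m := Nat.one_le_ceil_iff.2 hx1
    have hmn : m ≤ n := Nat.ceil_le.2 hx2
    simp only [mem_iUnion, Finset.mem_range]
    refine ⟨m - 1, by omega, ?_, ?_⟩
    · have : (m : ℝ) < (x - s) + 1 := Nat.ceil_lt_add_one hx1.le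
      have hcast : ((m - 1 : ℕ) : ℝ) = (m : ℝ) - 1 := by
        rw [Nat.cast_sub hm1]; norm_num
      rw [hcast]; linarith
    · have : x - s ≤ (m : ℝ) := Nat.le_ceil _
      have hcast : ((m - 1 : ℕ) : ℝ) = (m : ℝ) - 1 := by
        rw [Nat.cast_sub hm1]; norm_num
      rw [hcast]; linarith
  refine le_trans (measure_mono hsub) ?_
  refine le_trans (measure_biUnion_finset_le _ _) ?_
  refine le_trans (Finset.sum_le_sum fun k _ => measure_Ioc_le_unifE ν (by ring_nf; rfl)) ?_
  simp [Finset.sum_const, nsmul_eq_mul]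

lemma measure_Ioc_lt_top' {ν : Measure ℝ} (hν : unifE ν < ⊤) (s t : ℝ) :
    ν (Ioc s t) < ⊤ := by
  obtain ⟨n, hn⟩ := exists_nat_ge (t - s)
  exact lt_of_le_of_lt (measure_Ioc_le_nsmul ν s t n (by linarith))
    (ENNReal.mul_lt_top (ENNReal.natCast_ne_top n).lt_top hν)

lemma toReal_measure_Ioc_le_unifNorm {ν : Measure ℝ} (hν : unifE ν < ⊤) {s t : ℝ}
    (h : t ≤ s + 1) : (ν (Ioc s t)).toReal ≤ unifNorm ν :=
  ENNReal.toReal_mono hν.ne (measure_Ioc_le_unifE ν h)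

lemma toReal_measure_Ioc_le_mul {ν : Measure ℝ} (hν : unifE ν < ⊤) {s t : ℝ} (n : ℕ)
    (h : t ≤ s + n) : (ν (Ioc s t)).toReal ≤ (n : ℝ) * unifNorm ν := by
  have := measure_Ioc_le_nsmul ν s t n h
  have h2 : ((n : ENNReal) * unifE ν).toReal = (n : ℝ) * unifNorm ν := by
    rw [ENNReal.toReal_mul]; norm_num; exact Or.inl rfl
  rw [← h2]
  exact ENNReal.toReal_mono (ENNReal.mul_ne_top (ENNReal.natCast_ne_top n) hν.ne) this

lemma toReal_measure_singleton_le {ν : Measure ℝ} (hν : unifE ν < ⊤) (x : ℝ) :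
    (ν {x}).toReal ≤ unifNorm ν := by
  have hsub : ({x} : Set ℝ) ⊆ Ioc (x - 1) x := by
    intro y hy; rw [mem_singleton_iff] at hy; subst hy
    constructor <;> simp
  refine le_trans (ENNReal.toReal_mono ?_ (measure_mono hsub)) ?_
  · exact (lt_of_le_of_lt (measure_Ioc_le_unifE ν (by linarith)) hν).ne
  · exact toReal_measure_Ioc_le_unifNorm hν (by linarith)

lemma aux_abs_setIntegral_le {μ' : Measure ℝ} {f : ℝ → ℝ} {s : Set ℝ} (hs : μ' s < ⊤)
    (hf : AEStronglyMeasurable f (μ'.restrict s)) {M : ℝ} (hM : ∀ x ∈ s, |f x| ≤ M) :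
    |∫ x in s, f x ∂μ'| ≤ M * (μ' s).toReal := by
  have := norm_setIntegral_le_of_norm_le_const hs (C := M) (fun x hx => by
    rw [Real.norm_eq_abs]; exact hM x hx)
  rwa [Real.norm_eq_abs] at this

lemma aux_integrableOn_of_bound {μ' : Measure ℝ} {f : ℝ → ℝ} {s : Set ℝ}
    (hs : μ' s < ⊤) (hf : Measurable f) {M : ℝ}
    (hM : ∀ᵐ x ∂μ'.restrict s, |f x| ≤ M) : IntegrableOn f s μ' := by
  have hc : IntegrableOn (fun _ => M) s μ' := integrableOn_const hs.ne
  exact Integrable.mono' hc hf.aestronglyMeasurable (by simpa [Real.norm_eq_abs] using hM)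

lemma lm_bound {μp μm : Measure ℝ} {u : ℝ → ℝ} (hu : Measurable u) {s : Set ℝ}
    (hp : μp s < ⊤) (hm : μm s < ⊤) {M : ℝ} (hM : ∀ x ∈ s, |u x| ≤ M) :
    |(∫ x in s, u x ∂μp) - ∫ x in s, u x ∂μm| ≤ M * ((μp + μm) s).toReal := by
  have h1 := aux_abs_setIntegral_le hp (hu.aestronglyMeasurable.restrict) hM
  have h2 := aux_abs_setIntegral_le hm (hu.aestronglyMeasurable.restrict) hM
  have h3 : ((μp + μm) s).toReal = (μp s).toReal + (μm s).toReal := by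
    rw [Measure.add_apply, ENNReal.toReal_add hp.ne hm.ne]
  rw [h3, mul_add]
  calc |(∫ x in s, u x ∂μp) - ∫ x in s, u x ∂μm|
      ≤ |∫ x in s, u x ∂μp| + |∫ x in s, u x ∂μm| := abs_sub _ _
    _ ≤ _ := add_le_add h1 h2

lemma posCase (a u v : ℝ → ℝ) (A0 A : ℝ) (hA0 : 0 < A0) (hA : 0 < A)
    (haA0 : ∀ s, A0 ≤ a s) (haA : ∀ s, a s ≤ A)
    (hfm : Measurable (fun s => v s / a s))
    (hdiff : ∀ s t : ℝ, u t - u s = ∫ x in s..t, v x / a x)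
    (α r M K Bv : ℝ) (hr : 0 < r) (hM : 0 ≤ M)
    (hMu : ∀ t ∈ Ioc α (α + r), |u t| ≤ M)
    (hBv : ∀ t ∈ Ioc α (α + r), |v t| ≤ Bv)
    (hK : 2 * A / r ≤ K)
    (hall : ∀ s ∈ Ioc α (α + r), K * M < v s) : False := by
  set f := fun s => v s / a s with hf
  have haposx : ∀ x : ℝ, 0 < a x := fun x => lt_of_lt_of_le hA0 (haA0 x)
  have hBv0 : 0 ≤ Bv := le_trans (abs_nonneg _) (hBv (α + r) ⟨by linarith, le_rfl⟩)
  have hKM0 : 0 ≤ K * M := by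
    have hK0 : 0 < K := lt_of_lt_of_le (by positivity) hK
    positivity
  have hfb : ∀ x ∈ Ioc α (α + r), |f x| ≤ Bv / A0 := by
    intro x hx
    rw [hf]
    rw [abs_div, abs_of_pos (haposx x)]
    exact div_le_div₀ hBv0 (hBv x hx) hA0 (haA0 x)
  have hvol : volume (Ioc α (α + r)) < ⊤ := by
    rw [Real.volume_Ioc]; exact ENNReal.ofReal_lt_top
  have hint : IntegrableOn f (Ioc α (α + r)) volume :=
    aux_integrableOn_of_bound hvol hfm
      ((ae_restrict_iff' measurableSet_Ioc).2 (Eventually.of_forall hfb))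
  -- u α ≥ -M
  have huα : -M ≤ u α := by
    by_contra hcon
    push_neg at hcon
    set ε := (-M - u α) / 2 with hε
    have hε0 : 0 < ε := by rw [hε]; linarith
    set t := α + min (ε * A0 / (Bv + 1)) r with ht
    have hmin0 : 0 < min (ε * A0 / (Bv + 1)) r := lt_min (by positivity) hr
    have htI : t ∈ Ioc α (α + r) :=
      ⟨by rw [ht]; linarith, by rw [ht]; linarith [min_le_right (ε * A0 / (Bv + 1)) r]⟩
    have h1 : u t - u α = ∫ x in α..t, f x := hdiff α t
    have h2 : |∫ x in α..t, f x| ≤ (Bv / A0) * |t - α| := by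
      have := intervalIntegral.norm_integral_le_of_norm_le_const (C := Bv / A0)
        (f := f) (a := α) (b := t) ?_
      · rwa [Real.norm_eq_abs] at this
      · intro x hx
        rw [uIoc_of_le htI.1.le] at hx
        rw [Real.norm_eq_abs]
        exact hfb x ⟨hx.1, le_trans hx.2 htI.2⟩
    have h3 : (Bv / A0) * |t - α| ≤ ε := by
      have habs : |t - α| = min (ε * A0 / (Bv + 1)) r := by
        rw [ht]; rw [add_sub_cancel_left, abs_of_pos hmin0]
      rw [habs]
      have h4 : (Bv / A0) * min (ε * A0 / (Bv + 1)) r ≤ (Bv / A0) * (ε * A0 / (Bv + 1)) :=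
        mul_le_mul_of_nonneg_left (min_le_left _ _) (by positivity)
      have h5 : (Bv / A0) * (ε * A0 / (Bv + 1)) = ε * (Bv / (Bv + 1)) := by
        field_simp
      have h6 : Bv / (Bv + 1) ≤ 1 := by
        rw [div_le_one (by linarith)]; linarith
      calc (Bv / A0) * min (ε * A0 / (Bv + 1)) r ≤ ε * (Bv / (Bv + 1)) := by
            rw [← h5]; exact h4
        _ ≤ ε * 1 := mul_le_mul_of_nonneg_left h6 hε0.le
        _ = ε := mul_one ε
    have hut : -M ≤ u t := (abs_le.1 (hMu t htI)).1
    have : ∫ x in α..t, f x ≤ ε := le_trans (le_abs_self _) (le_trans h2 h3)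
    rw [hε] at this
    linarith [h1, this, hut]
  -- strict integral positivity
  set c := K * M / A with hc
  set g := fun x => f x - c with hg
  have hgpos : ∀ x ∈ Ioc α (α + r), 0 < g x := by
    intro x hx
    have hvx : K * M < v x := hall x hx
    have h1 : v x / A ≤ v x / a x := by
      exact div_le_div_of_nonneg_left (by linarith) (haposx x) (haA x)
    have h2 : c < v x / A := by
      rw [hc]; exact (div_lt_div_iff_of_pos_right hA).2 hvx
    have : g x = v x / a x - c := rfl
    rw [this]; linarith
  have hgint : IntegrableOn g (Ioc α (α + r)) volume := hint.sub (integrableOn_const hvol.ne)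
  have hpos : 0 < ∫ x in Ioc α (α + r), g x := by
    rw [setIntegral_pos_iff_support_of_nonneg_ae]
    · have hsub : Ioc α (α + r) ⊆ Function.support g ∩ Ioc α (α + r) :=
        fun x hx => ⟨ne_of_gt (hgpos x hx), hx⟩
      refine lt_of_lt_of_le ?_ (measure_mono hsub)
      rw [Real.volume_Ioc, show α + r - α = r by ring]
      exact ENNReal.ofReal_pos.2 hr
    · exact (ae_restrict_iff' measurableSet_Ioc).2
        (Eventually.of_forall fun x hx => (hgpos x hx).le)
    · exact hgint
  have hsplit : ∫ x in Ioc α (α + r), g x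
      = (∫ x in Ioc α (α + r), f x) - c * r := by
    calc ∫ x in Ioc α (α + r), g x
        = (∫ x in Ioc α (α + r), f x) - ∫ _x in Ioc α (α + r), (c : ℝ) := by
          simp only [hg]
          exact integral_sub hint (integrableOn_const hvol.ne)
      _ = (∫ x in Ioc α (α + r), f x) - c * r := by
          rw [setIntegral_const, smul_eq_mul, measureReal_def, Real.volume_Ioc,
            show α + r - α = r by ring, ENNReal.toReal_ofReal hr.le, mul_comm]
  have hintf : K * M / A * r < ∫ x in Ioc α (α + r), f x := by
    rw [hsplit] at hpos; rw [hc] at *; linarith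
  have heq : u (α + r) - u α = ∫ x in Ioc α (α + r), f x := by
    rw [hdiff α (α + r), intervalIntegral.integral_of_le (by linarith)]
  have h2M : 2 * M ≤ K * M / A * r := by
    rw [div_le_iff₀ hr] at hK
    rw [div_mul_eq_mul_div, le_div_iff₀ hA]
    nlinarith
  have hur : u (α + r) ≤ M := (abs_le.1 (hMu (α + r) ⟨by linarith, le_rfl⟩)).2
  linarith

lemma mixedCase (μp μm : Measure ℝ) (hunif : unifE (μp + μm) < ⊤)
    (u v : ℝ → ℝ) (hmu : Measurable u)
    (heqv : ∀ s t : ℝ, s ≤ t →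
      v t - v s = (∫ x in Ioc s t, u x ∂μp) - ∫ x in Ioc s t, u x ∂μm)
    (α r M K : ℝ) (hM : 0 ≤ M)
    (hMu : ∀ t ∈ Ioc α (α + r), |u t| ≤ M)
    (hK : 0 < K) (hK2 : unifNorm (μp + μm) ≤ 2 * K)
    (hall : ∀ s ∈ Ioc α (α + r), K * M < |v s|)
    (s1 s2 : ℝ) (h1 : s1 ∈ Ioc α (α + r)) (h2 : s2 ∈ Ioc α (α + r)) (h12 : s1 < s2)
    (hv1 : K * M < v s1) (hv2 : v s2 < -(K * M)) : False := by
  have hKM0 : 0 ≤ K * M := by positivity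
  -- finiteness helpers
  have hfinp : ∀ s : Set ℝ, s ⊆ Ioc α (α + r) → μp s < ⊤ := by
    intro s hs
    refine lt_of_le_of_lt (measure_mono hs) ?_
    refine lt_of_le_of_lt ?_ (measure_Ioc_lt_top' hunif α (α + r))
    exact Measure.le_iff'.1 (Measure.le_add_right le_rfl) _
  have hfinm : ∀ s : Set ℝ, s ⊆ Ioc α (α + r) → μm s < ⊤ := by
    intro s hs
    refine lt_of_le_of_lt (measure_mono hs) ?_
    refine lt_of_le_of_lt ?_ (measure_Ioc_lt_top' hunif α (α + r))
    exact Measure.le_iff'.1 (Measure.le_add_left le_rfl) _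
  set S := {t : ℝ | t ∈ Ioc α (α + r) ∧ s1 ≤ t ∧ v t < -(K * M)} with hS
  have hs2S : s2 ∈ S := ⟨h2, h12.le, hv2⟩
  have hSbdd : BddBelow S := ⟨s1, fun x hx => hx.2.1⟩
  set τ := sInf S with hτ
  have hτs1 : s1 ≤ τ := le_csInf ⟨s2, hs2S⟩ fun x hx => hx.2.1
  have hτs2 : τ ≤ s2 := csInf_le hSbdd hs2S
  have hτI : τ ∈ Ioc α (α + r) := ⟨lt_of_lt_of_le h1.1 hτs1, le_trans hτs2 h2.2⟩
  rcases lt_abs.1 (hall τ hτI) with hpos | hneg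
  · -- v τ > K M : jump from the right
    have htend : Tendsto (fun n : ℕ => (μp + μm) (Ioc τ (τ + 1 / (n + 1)))) atTop (𝓝 0) := by
      have hiempty : (⋂ n : ℕ, Ioc τ (τ + 1 / ((n : ℝ) + 1))) = ∅ := by
        rw [eq_empty_iff_forall_notMem]
        intro x hx
        rw [mem_iInter] at hx
        have hxτ : τ < x := (hx 0).1
        obtain ⟨n, hn⟩ := exists_nat_one_div_lt (show 0 < x - τ by linarith)
        have := (hx n).2
        push_cast at hn
        linarith
      have := tendsto_measure_iInter_atTop (μ := μp + μm)
        (s := fun n : ℕ => Ioc τ (τ + 1 / ((n : ℝ) + 1)))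
        (fun n => measurableSet_Ioc.nullMeasurableSet)
        (fun i j hij => Ioc_subset_Ioc_right (by
          have : (i : ℝ) ≤ (j : ℝ) := Nat.cast_le.2 hij
          have h1' : (0:ℝ) < (i:ℝ) + 1 := by positivity
          have h2' : (0:ℝ) < (j:ℝ) + 1 := by positivity
          have := one_div_le_one_div_of_le h1' (show (i:ℝ) + 1 ≤ (j:ℝ) + 1 by linarith)
          linarith))
        ⟨0, (lt_of_le_of_lt (measure_mono (Ioc_subset_Ioc_right (by norm_num)))
          (measure_Ioc_lt_top' hunif τ (τ + 1))).ne⟩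
      rw [hiempty] at this
      simpa [Function.comp_def] using this
    have hlt := (tendsto_order.1 htend).2 (ENNReal.ofReal (2 * K))
      (ENNReal.ofReal_pos.2 (by linarith))
    obtain ⟨n, hn⟩ := hlt.exists
    obtain ⟨t, htS, htlt⟩ := Real.lt_sInf_add_pos ⟨s2, hs2S⟩
      (show (0:ℝ) < 1 / ((n : ℝ) + 1) by positivity)
    have hτt : τ < t := by
      rcases lt_or_eq_of_le (csInf_le hSbdd htS) with h | h
      · exact h
      · exfalso; rw [← h] at htS; linarith [htS.2.2]
    have hsub : Ioc τ t ⊆ Ioc τ (τ + 1 / ((n : ℝ) + 1)) :=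
      Ioc_subset_Ioc_right (le_of_lt htlt)
    have hb : |v t - v τ| ≤ M * ((μp + μm) (Ioc τ (τ + 1 / ((n : ℝ) + 1)))).toReal := by
      rw [heqv τ t hτt.le]
      refine le_trans (lm_bound hmu (hfinp _ ?_) (hfinm _ ?_)
        (fun x hx => hMu x ?_)) ?_
      · exact fun x hx => ⟨lt_trans hτI.1 hx.1, le_trans hx.2 htS.1.2⟩
      · exact fun x hx => ⟨lt_trans hτI.1 hx.1, le_trans hx.2 htS.1.2⟩
      · exact ⟨lt_trans hτI.1 hx.1, le_trans hx.2 htS.1.2⟩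
      · refine mul_le_mul_of_nonneg_left (ENNReal.toReal_mono ?_ (measure_mono hsub)) hM
        exact (lt_of_lt_of_le hn le_top).ne    -- ν small interval ≠ ⊤
    have hcR : ((μp + μm) (Ioc τ (τ + 1 / ((n : ℝ) + 1)))).toReal < 2 * K := by
      rw [← ENNReal.lt_ofReal_iff_toReal_lt (ne_top_of_lt hn)]
      exact hn
    have hchain : v τ - v t ≤ |v t - v τ| := by
      rw [abs_sub_comm]; exact le_abs_self _
    nlinarith [htS.2.2, hb, hcR, hM]
  · -- v τ < -(K M) : jump from the left
    have hvτ : v τ < -(K * M) := by linarith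
    have hs1τ : s1 < τ := by
      rcases lt_or_eq_of_le hτs1 with h | h
      · exact h
      · exfalso; rw [← h] at hvτ; linarith
    set w : ℕ → ℝ := fun n => max s1 (τ - 1 / ((n : ℝ) + 1)) with hw
    have hw1 : ∀ n, s1 ≤ w n := fun n => le_max_left _ _
    have hwτ : ∀ n, w n < τ := fun n => max_lt hs1τ (by
      have : (0:ℝ) < 1 / ((n : ℝ) + 1) := by positivity
      linarith)
    have hwI : ∀ n, w n ∈ Ioc α (α + r) :=
      fun n => ⟨lt_of_lt_of_le h1.1 (hw1 n), le_trans (hwτ n).le hτI.2⟩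
    have hwS : ∀ n, K * M < v (w n) := by
      intro n
      rcases lt_abs.1 (hall (w n) (hwI n)) with h | h
      · exact h
      · exfalso
        have : w n ∈ S := ⟨hwI n, hw1 n, by linarith⟩
        exact absurd (csInf_le hSbdd this) (not_le.2 (hwτ n))
    -- decomposition
    have hIooI : ∀ n, Ioo (w n) τ ⊆ Ioc α (α + r) :=
      fun n x hx => ⟨lt_of_lt_of_le h1.1 (le_trans (hw1 n) hx.1.le), le_trans hx.2.le hτI.2⟩
    have hsingI : ({τ} : Set ℝ) ⊆ Ioc α (α + r) := by
      intro x hx; rw [mem_singleton_iff] at hx; subst hx; exact hτI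
    set Aφ := (∫ x in ({τ} : Set ℝ), u x ∂μp) - ∫ x in ({τ} : Set ℝ), u x ∂μm with hAφ
    have hdecomp : ∀ n, v τ - v (w n) =
        ((∫ x in Ioo (w n) τ, u x ∂μp) - ∫ x in Ioo (w n) τ, u x ∂μm) + Aφ := by
      intro n
      rw [heqv (w n) τ (hwτ n).le]
      have hsplit : Ioc (w n) τ = Ioo (w n) τ ∪ {τ} := by
        rw [Set.Ioo_union_right (hwτ n)]
      have hdisj : Disjoint (Ioo (w n) τ) ({τ} : Set ℝ) := by
        simp [disjoint_singleton_right]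
      have hip1 : IntegrableOn u (Ioo (w n) τ) μp :=
        aux_integrableOn_of_bound (hfinp _ (hIooI n)) hmu
          ((ae_restrict_iff' measurableSet_Ioo).2
            (Eventually.of_forall fun x hx => hMu x (hIooI n hx)))
      have hip2 : IntegrableOn u ({τ} : Set ℝ) μp :=
        aux_integrableOn_of_bound (hfinp _ hsingI) hmu
          ((ae_restrict_iff' (measurableSet_singleton τ)).2
            (Eventually.of_forall fun x hx => hMu x (hsingI hx)))
      have him1 : IntegrableOn u (Ioo (w n) τ) μm :=
        aux_integrableOn_of_bound (hfinm _ (hIooI n)) hmu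
          ((ae_restrict_iff' measurableSet_Ioo).2
            (Eventually.of_forall fun x hx => hMu x (hIooI n hx)))
      have him2 : IntegrableOn u ({τ} : Set ℝ) μm :=
        aux_integrableOn_of_bound (hfinm _ hsingI) hmu
          ((ae_restrict_iff' (measurableSet_singleton τ)).2
            (Eventually.of_forall fun x hx => hMu x (hsingI hx)))
      rw [hsplit, setIntegral_union hdisj (measurableSet_singleton τ) hip1 hip2,
        setIntegral_union hdisj (measurableSet_singleton τ) him1 him2, hAφ]
      ring
    -- the Ioo measures tend to 0
    have htend : Tendsto (fun n : ℕ => ((μp + μm) (Ioo (w n) τ)).toReal) atTop (𝓝 0) := by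
      have hiempty : (⋂ n : ℕ, Ioo (w n) τ) = ∅ := by
        rw [eq_empty_iff_forall_notMem]
        intro x hx
        rw [mem_iInter] at hx
        have hxτ : x < τ := (hx 0).2
        obtain ⟨n, hn⟩ := exists_nat_one_div_lt (show 0 < τ - x by linarith)
        have h5 : w n < x := (hx n).1
        have h6 : τ - 1 / ((n : ℝ) + 1) ≤ w n := le_max_right _ _
        push_cast at hn
        linarith
      have hmono : Antitone fun n : ℕ => Ioo (w n) τ := by
        intro i j hij
        refine Ioo_subset_Ioo_left ?_
        simp only [hw]
        refine max_le_max le_rfl ?_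
        have hcast : (i : ℝ) ≤ (j : ℝ) := Nat.cast_le.2 hij
        have h1' : (0:ℝ) < (i:ℝ) + 1 := by positivity
        have := one_div_le_one_div_of_le h1' (show (i:ℝ) + 1 ≤ (j:ℝ) + 1 by linarith)
        linarith
      have h0 := tendsto_measure_iInter_atTop (μ := μp + μm)
        (s := fun n : ℕ => Ioo (w n) τ)
        (fun n => measurableSet_Ioo.nullMeasurableSet) hmono
        ⟨0, (lt_of_le_of_lt (measure_mono Ioo_subset_Ioc_self)
          (measure_Ioc_lt_top' hunif (w 0) τ)).ne⟩
      rw [hiempty] at h0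
      simp only [measure_empty] at h0
      have := (ENNReal.tendsto_toReal (a := 0) (by simp)).comp h0
      simpa [Function.comp_def] using this
    -- bounds
    have hIoob : ∀ n, |(∫ x in Ioo (w n) τ, u x ∂μp) - ∫ x in Ioo (w n) τ, u x ∂μm|
        ≤ M * ((μp + μm) (Ioo (w n) τ)).toReal := by
      intro n
      exact lm_bound hmu (hfinp _ (hIooI n)) (hfinm _ (hIooI n))
        (fun x hx => hMu x (hIooI n hx))
    have hatom : |Aφ| ≤ M * ((μp + μm) ({τ} : Set ℝ)).toReal := by
      rw [hAφ]
      exact lm_bound hmu (hfinp _ hsingI) (hfinm _ hsingI)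
        (fun x hx => hMu x (hsingI hx))
    have hatomN : ((μp + μm) ({τ} : Set ℝ)).toReal ≤ unifNorm (μp + μm) :=
      toReal_measure_singleton_le hunif τ
    -- limit inequality : Aφ ≤ v τ - K * M
    have hAle : ∀ n, Aφ ≤ v τ - K * M + M * ((μp + μm) (Ioo (w n) τ)).toReal := by
      intro n
      have hd := hdecomp n
      have hlb := neg_abs_le ((∫ x in Ioo (w n) τ, u x ∂μp) - ∫ x in Ioo (w n) τ, u x ∂μm)
      have := hIoob n
      have := hwS n
      linarith
    have hlim : Tendsto (fun n : ℕ => v τ - K * M + M * ((μp + μm) (Ioo (w n) τ)).toReal)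
        atTop (𝓝 (v τ - K * M + M * 0)) :=
      tendsto_const_nhds.add (htend.const_mul M)
    have hAfinal : Aφ ≤ v τ - K * M := by
      have := ge_of_tendsto hlim (Eventually.of_forall hAle)
      simpa using this
    have hlb2 : -|Aφ| ≤ Aφ := neg_abs_le Aφ
    have hmn : M * ((μp + μm) ({τ} : Set ℝ)).toReal ≤ M * unifNorm (μp + μm) :=
      mul_le_mul_of_nonneg_left hatomN hM
    have hmn2 : M * unifNorm (μp + μm) ≤ M * (2 * K) :=
      mul_le_mul_of_nonneg_left hK2 hM
    nlinarith [hatom]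

set_option maxHeartbeats 1000000 in
lemma solution_global_integrable
    (a u v : ℝ → ℝ) (μp μm : Measure ℝ)
    (A0 : ℝ) (hA0 : 0 < A0) (haA0 : ∀ s, A0 ≤ a s)
    (hmu : Measurable u) (hfm : Measurable (fun s => v s / a s))
    (hunif : unifE (μp + μm) < ⊤)
    (hequ : ∀ t : ℝ, u t = u 0 + ∫ s in (0:ℝ)..t, v s / a s)
    (heqv : ∀ s t : ℝ, s ≤ t →
      v t - v s = (∫ x in Ioc s t, u x ∂μp) - ∫ x in Ioc s t, u x ∂μm) :
    ∀ t : ℝ, IntervalIntegrable (fun s => v s / a s) volume 0 t := by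
  set f := fun s => v s / a s with hf
  set N := unifNorm (μp + μm) with hN
  have hN0 : 0 ≤ N := unifNorm_nonneg _
  set h := min 1 (A0 / (2 * (N + 1))) with hh
  have hh0 : 0 < h := lt_min one_pos (by positivity)
  have hh1 : h ≤ 1 := min_le_left _ _
  have hcontr : h * N * 2 ≤ A0 := by
    have h2 : h ≤ A0 / (2 * (N + 1)) := min_le_right _ _
    rw [le_div_iff₀ (by positivity)] at h2
    nlinarith
  have haposx : ∀ x : ℝ, 0 < a x := fun x => lt_of_lt_of_le hA0 (haA0 x)
  have habs : ∀ x : ℝ, |f x| ≤ |v x| / A0 := by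
    intro x
    rw [hf]
    simp only
    rw [abs_div, abs_of_pos (haposx x)]
    exact div_le_div_of_nonneg_left (abs_nonneg _) hA0 (haA0 x)
  have hνfin : ∀ s t : ℝ, (μp + μm) (Ioc s t) < ⊤ := fun s t => measure_Ioc_lt_top' hunif s t
  have hpfin : ∀ s t : ℝ, μp (Ioc s t) < ⊤ := fun s t =>
    lt_of_le_of_lt (Measure.le_iff'.1 (Measure.le_add_right le_rfl) _) (hνfin s t)
  have hmfin : ∀ s t : ℝ, μm (Ioc s t) < ⊤ := fun s t =>
    lt_of_le_of_lt (Measure.le_iff'.1 (Measure.le_add_left le_rfl) _) (hνfin s t)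
  have hvolfin : ∀ s t : ℝ, volume (Ioc s t) < ⊤ := fun s t => by
    rw [Real.volume_Ioc]; exact ENNReal.ofReal_lt_top
  have hvdiff : ∀ (s t B : ℝ), 0 ≤ B → s ≤ t → t ≤ s + 1 →
      (∀ x ∈ Ioc s t, |u x| ≤ B) → |v t - v s| ≤ B * N := by
    intro s t B hB hst h1 hb
    rw [heqv s t hst]
    refine le_trans (lm_bound hmu (hpfin s t) (hmfin s t) hb) ?_
    exact mul_le_mul_of_nonneg_left (toReal_measure_Ioc_le_unifNorm hunif h1) hB
  -- step to the right
  have stepR : ∀ T : ℝ, 0 ≤ T → IntervalIntegrable f volume 0 T →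
      ∀ δ : ℝ, 0 ≤ δ → δ ≤ h → IntervalIntegrable f volume 0 (T + δ) := by
    intro T hT hPT
    set E := {δ : ℝ | δ ∈ Icc 0 h ∧ IntervalIntegrable f volume 0 (T + δ)} with hE
    have hE0 : (0:ℝ) ∈ E := ⟨⟨le_rfl, hh0.le⟩, by simpa using hPT⟩
    have hEbdd : BddAbove E := ⟨h, fun x hx => hx.1.2⟩
    have hdown : ∀ δ, δ ∈ E → ∀ δ', 0 ≤ δ' → δ' ≤ δ → δ' ∈ E := by
      rintro δ ⟨⟨hδ0, hδh⟩, hPδ⟩ δ' h0' hle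
      refine ⟨⟨h0', le_trans hle hδh⟩, ?_⟩
      rw [intervalIntegrable_iff_integrableOn_Ioc_of_le (by linarith)] at hPδ ⊢
      exact hPδ.mono_set (Ioc_subset_Ioc_right (by linarith))
    set BU := 2 * |u T| + 2 * (h * |v T| / A0) with hBU
    set BV := |v T| + N * BU with hBV
    have hBU0 : 0 ≤ BU := by positivity
    have key : ∀ δ, δ ∈ E → (∀ σ ∈ Icc T (T + δ), |u σ| ≤ BU) ∧
        (∀ σ ∈ Icc T (T + δ), |v σ| ≤ BV) := by
      rintro δ ⟨⟨hδ0, hδh⟩, hPδ⟩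
      have hPδ' : IntegrableOn f (Ioc 0 (T + δ)) volume :=
        (intervalIntegrable_iff_integrableOn_Ioc_of_le (by linarith)).1 hPδ
      have hint : IntegrableOn f (Ioc T (T + δ)) volume := hPδ'.mono_set (Ioc_subset_Ioc_left hT)
      have hintabs : IntegrableOn (fun x => |f x|) (Ioc T (T + δ)) volume := hint.abs
      set B := |u T| + ∫ x in Ioc T (T + δ), |f x| with hB
      have hInonneg : 0 ≤ ∫ x in Ioc T (T + δ), |f x| :=
        setIntegral_nonneg measurableSet_Ioc fun x _ => abs_nonneg _
      have hB0 : 0 ≤ B := by rw [hB]; linarith [abs_nonneg (u T)]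
      have hu : ∀ σ ∈ Icc T (T + δ), |u σ| ≤ B := by
        intro σ hσ
        have hP0σ : IntervalIntegrable f volume 0 σ := by
          rw [intervalIntegrable_iff_integrableOn_Ioc_of_le (le_trans hT hσ.1)]
          exact hPδ'.mono_set (Ioc_subset_Ioc_right hσ.2)
        have hdiffσ : u σ - u T = ∫ x in T..σ, f x := by
          rw [hequ σ, hequ T]
          have := intervalIntegral.integral_interval_sub_left hP0σ hPT
          linarith
        have hb1 : |∫ x in T..σ, f x| ≤ ∫ x in Ioc T (T + δ), |f x| := by
          rw [intervalIntegral.integral_of_le hσ.1]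
          refine le_trans ?_ (setIntegral_mono_set hintabs
            (Eventually.of_forall fun x => abs_nonneg _)
            (HasSubset.Subset.eventuallyLE (Ioc_subset_Ioc_right hσ.2)))
          exact (norm_integral_le_integral_norm f).trans_eq (by simp [Real.norm_eq_abs])
        have : |u σ| ≤ |u T| + |∫ x in T..σ, f x| := by
          rw [show u σ = u T + (u σ - u T) by ring, hdiffσ]
          exact abs_add_le _ _
        rw [hB]; linarith
      have hv : ∀ σ ∈ Icc T (T + δ), |v σ| ≤ |v T| + B * N := by
        intro σ hσ
        have hd := hvdiff T σ B hB0 hσ.1 (by linarith [hσ.2]) fun x hx =>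
          hu x ⟨hx.1.le, le_trans hx.2 hσ.2⟩
        have := abs_sub_abs_le_abs_sub (v σ) (v T)
        linarith
      have hBle : B ≤ |u T| + ((|v T| + B * N) / A0) * δ := by
        have hptw : ∀ x ∈ Ioc T (T + δ), |(|f x|)| ≤ (|v T| + B * N) / A0 := by
          intro x hx
          rw [abs_abs]
          refine le_trans (habs x) ?_
          have := hv x ⟨hx.1.le, hx.2⟩
          gcongr
        have := aux_abs_setIntegral_le (hvolfin T (T + δ))
          ((hfm.abs).aestronglyMeasurable.restrict) hptw
        have hveq : (volume (Ioc T (T + δ))).toReal = δ := by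
          rw [Real.volume_Ioc, show T + δ - T = δ by ring, ENNReal.toReal_ofReal hδ0]
        rw [hveq] at this
        have h2 : ∫ x in Ioc T (T + δ), |f x| ≤ (|v T| + B * N) / A0 * δ :=
          le_trans (le_abs_self _) this
        rw [hB]; linarith
      have hBfin : B ≤ BU := by
        have e1 : ((|v T| + B * N) / A0) * δ ≤ ((|v T| + B * N) / A0) * h :=
          mul_le_mul_of_nonneg_left hδh (by positivity)
        have e2 : ((|v T| + B * N) / A0) * h = h * |v T| / A0 + (h * N / A0) * B := by
          field_simp
        have e3 : (h * N / A0) * B ≤ (1 / 2) * B := by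
          refine mul_le_mul_of_nonneg_right ?_ hB0
          rw [div_le_iff₀ hA0]; linarith
        rw [hBU]; linarith
      refine ⟨fun σ hσ => le_trans (hu σ hσ) hBfin, fun σ hσ => ?_⟩
      have h4 : B * N ≤ BU * N := mul_le_mul_of_nonneg_right hBfin hN0
      have := hv σ hσ
      rw [hBV]; nlinarith
    set β := sSup E with hβ
    have hβ0 : 0 ≤ β := le_csSup hEbdd hE0
    have hβh : β ≤ h := csSup_le ⟨0, hE0⟩ fun x hx => hx.1.2
    have hβE : β ∈ E := by
      refine ⟨⟨hβ0, hβh⟩, ?_⟩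
      rcases eq_or_lt_of_le hβ0 with heq0 | hβpos
      · have : T + β = T := by rw [← heq0]; ring
        rw [this]; exact hPT
      · rw [intervalIntegrable_iff_integrableOn_Ioc_of_le (by linarith)]
        have hsplit : Ioc 0 (T + β) = Ioc 0 T ∪ Ioc T (T + β) :=
          (Ioc_union_Ioc_eq_Ioc hT (by linarith)).symm
        rw [hsplit]
        refine IntegrableOn.union
          ((intervalIntegrable_iff_integrableOn_Ioc_of_le hT).1 hPT) ?_
        refine aux_integrableOn_of_bound (M := BV / A0) (hvolfin T (T + β)) hfm ?_
        have hae1 : ∀ᵐ x ∂volume.restrict (Ioc T (T + β)), x ∈ Ioc T (T + β) :=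
          ae_restrict_mem measurableSet_Ioc
        have hae2 : ∀ᵐ x ∂volume.restrict (Ioc T (T + β)), x ≠ T + β := by
          refine ae_restrict_of_ae ?_
          rw [ae_iff]
          have : {x : ℝ | ¬x ≠ T + β} = {T + β} := by
            ext y; simp [Set.mem_singleton_iff]
          rw [this]
          exact Real.volume_singleton
        filter_upwards [hae1, hae2] with x hx hxne
        have hxlt : x < T + β := lt_of_le_of_ne hx.2 hxne
        obtain ⟨δ', hδ'E, hδ'lt⟩ := exists_lt_of_lt_csSup ⟨0, hE0⟩
          (show x - T < β by linarith)
        have hb := (key δ' hδ'E).2 x ⟨hx.1.le, by linarith⟩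
        calc |f x| ≤ |v x| / A0 := habs x
          _ ≤ BV / A0 := by gcongr
    have hβeqh : β = h := by
      by_contra hne
      have hβlt : β < h := lt_of_le_of_ne hβh hne
      have hjunk : ∀ σ ∈ Ioc (T + β) (T + h), u σ = u 0 := by
        intro σ hσ
        have hnP : ¬IntervalIntegrable f volume 0 σ := by
          intro hP
          have hmem : σ - T ∈ E := by
            refine ⟨⟨by linarith [hσ.1], by linarith [hσ.2]⟩, ?_⟩
            rw [show T + (σ - T) = σ by ring]
            exact hP
          have := le_csSup hEbdd hmem
          linarith [hσ.1]
        rw [hequ σ, intervalIntegral.integral_undef hnP, add_zero]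
      have hub2 : ∀ x ∈ Ioc (T + β) (T + h), |u x| ≤ |u 0| + BU := by
        intro x hx
        rw [hjunk x hx]
        linarith [abs_nonneg (u 0), hBU0]
      have hvβ : |v (T + β)| ≤ BV := (key β hβE).2 (T + β) ⟨by linarith, le_rfl⟩
      have hv2 : ∀ σ ∈ Ioc (T + β) (T + h), |v σ| ≤ BV + (|u 0| + BU) * N := by
        intro σ hσ
        have hd := hvdiff (T + β) σ (|u 0| + BU) (by positivity) hσ.1.le
          (by linarith [hσ.2]) fun x hx => hub2 x ⟨hx.1, le_trans hx.2 hσ.2⟩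
        have := abs_sub_abs_le_abs_sub (v σ) (v (T + β))
        linarith
      have hPh : IntervalIntegrable f volume 0 (T + h) := by
        rw [intervalIntegrable_iff_integrableOn_Ioc_of_le (by linarith)]
        have hsplit : Ioc 0 (T + h) = Ioc 0 (T + β) ∪ Ioc (T + β) (T + h) :=
          (Ioc_union_Ioc_eq_Ioc (by linarith) (by linarith)).symm
        rw [hsplit]
        refine IntegrableOn.union
          ((intervalIntegrable_iff_integrableOn_Ioc_of_le (by linarith)).1 hβE.2) ?_
        refine aux_integrableOn_of_bound (M := (BV + (|u 0| + BU) * N) / A0) (hvolfin _ _) hfm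
          ((ae_restrict_iff' measurableSet_Ioc).2 (Eventually.of_forall ?_))
        intro x hx
        calc |f x| ≤ |v x| / A0 := habs x
          _ ≤ (BV + (|u 0| + BU) * N) / A0 := by
              have := hv2 x hx; gcongr
      have : h ∈ E := ⟨⟨hh0.le, le_rfl⟩, hPh⟩
      linarith [le_csSup hEbdd this]
    intro δ hδ0 hδh
    exact (hdown β hβE δ hδ0 (by linarith [hβeqh])).2
  -- step to the left
  have stepL : ∀ T : ℝ, 0 ≤ T → IntervalIntegrable f volume 0 (-T) →
      ∀ δ : ℝ, 0 ≤ δ → δ ≤ h → IntervalIntegrable f volume 0 (-T - δ) := by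
    intro T hT hPT
    have hPiff : ∀ x : ℝ, x ≤ 0 →
        (IntervalIntegrable f volume 0 x ↔ IntegrableOn f (Ioc x 0) volume) := by
      intro x hx
      rw [intervalIntegrable_iff, uIoc_comm, uIoc_of_le hx]
    set E := {δ : ℝ | δ ∈ Icc 0 h ∧ IntervalIntegrable f volume 0 (-T - δ)} with hE
    have hE0 : (0:ℝ) ∈ E := ⟨⟨le_rfl, hh0.le⟩, by simpa using hPT⟩
    have hEbdd : BddAbove E := ⟨h, fun x hx => hx.1.2⟩
    have hdown : ∀ δ, δ ∈ E → ∀ δ', 0 ≤ δ' → δ' ≤ δ → δ' ∈ E := by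
      rintro δ ⟨⟨hδ0, hδh⟩, hPδ⟩ δ' h0' hle
      refine ⟨⟨h0', le_trans hle hδh⟩, ?_⟩
      rw [hPiff _ (by linarith)] at hPδ ⊢
      exact hPδ.mono_set (Ioc_subset_Ioc_left (by linarith))
    set BU := 2 * |u (-T)| + 2 * (h * |v (-T)| / A0) with hBU
    set BV := |v (-T)| + N * BU with hBV
    have hBU0 : 0 ≤ BU := by positivity
    have key : ∀ δ, δ ∈ E → (∀ σ ∈ Icc (-T - δ) (-T), |u σ| ≤ BU) ∧
        (∀ σ ∈ Icc (-T - δ) (-T), |v σ| ≤ BV) := by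
      rintro δ ⟨⟨hδ0, hδh⟩, hPδ⟩
      have hPδ' : IntegrableOn f (Ioc (-T - δ) 0) volume := (hPiff _ (by linarith)).1 hPδ
      have hint : IntegrableOn f (Ioc (-T - δ) (-T)) volume :=
        hPδ'.mono_set (Ioc_subset_Ioc_right (by linarith))
      have hintabs : IntegrableOn (fun x => |f x|) (Ioc (-T - δ) (-T)) volume := hint.abs
      set B := |u (-T)| + ∫ x in Ioc (-T - δ) (-T), |f x| with hB
      have hInonneg : 0 ≤ ∫ x in Ioc (-T - δ) (-T), |f x| :=
        setIntegral_nonneg measurableSet_Ioc fun x _ => abs_nonneg _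
      have hB0 : 0 ≤ B := by rw [hB]; linarith [abs_nonneg (u (-T))]
      have hu : ∀ σ ∈ Icc (-T - δ) (-T), |u σ| ≤ B := by
        intro σ hσ
        have hP0σ : IntervalIntegrable f volume 0 σ := by
          rw [hPiff _ (by linarith [hσ.2])]
          exact hPδ'.mono_set (Ioc_subset_Ioc_left hσ.1)
        have hdiffσ : u σ - u (-T) = ∫ x in (-T)..σ, f x := by
          rw [hequ σ, hequ (-T)]
          have := intervalIntegral.integral_interval_sub_left hP0σ hPT
          linarith
        have hb1 : |∫ x in (-T)..σ, f x| ≤ ∫ x in Ioc (-T - δ) (-T), |f x| := by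
          rw [intervalIntegral.integral_symm, abs_neg, intervalIntegral.integral_of_le hσ.2]
          refine le_trans ?_ (setIntegral_mono_set hintabs
            (Eventually.of_forall fun x => abs_nonneg _)
            (HasSubset.Subset.eventuallyLE (Ioc_subset_Ioc_left hσ.1)))
          exact (norm_integral_le_integral_norm f).trans_eq (by simp [Real.norm_eq_abs])
        have : |u σ| ≤ |u (-T)| + |∫ x in (-T)..σ, f x| := by
          rw [show u σ = u (-T) + (u σ - u (-T)) by ring, hdiffσ]
          exact abs_add_le _ _
        rw [hB]; linarith
      have hv : ∀ σ ∈ Icc (-T - δ) (-T), |v σ| ≤ |v (-T)| + B * N := by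
        intro σ hσ
        have hd := hvdiff σ (-T) B hB0 hσ.2 (by linarith [hσ.1]) fun x hx =>
          hu x ⟨le_trans hσ.1 hx.1.le, hx.2⟩
        rw [abs_sub_comm] at hd
        have := abs_sub_abs_le_abs_sub (v σ) (v (-T))
        linarith
      have hBle : B ≤ |u (-T)| + ((|v (-T)| + B * N) / A0) * δ := by
        have hptw : ∀ x ∈ Ioc (-T - δ) (-T), |(|f x|)| ≤ (|v (-T)| + B * N) / A0 := by
          intro x hx
          rw [abs_abs]
          refine le_trans (habs x) ?_
          have := hv x ⟨hx.1.le, hx.2⟩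
          gcongr
        have := aux_abs_setIntegral_le (hvolfin (-T - δ) (-T))
          ((hfm.abs).aestronglyMeasurable.restrict) hptw
        have hveq : (volume (Ioc (-T - δ) (-T))).toReal = δ := by
          rw [Real.volume_Ioc, show -T - (-T - δ) = δ by ring, ENNReal.toReal_ofReal hδ0]
        rw [hveq] at this
        have h2 : ∫ x in Ioc (-T - δ) (-T), |f x| ≤ (|v (-T)| + B * N) / A0 * δ :=
          le_trans (le_abs_self _) this
        rw [hB]; linarith
      have hBfin : B ≤ BU := by
        have e1 : ((|v (-T)| + B * N) / A0) * δ ≤ ((|v (-T)| + B * N) / A0) * h :=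
          mul_le_mul_of_nonneg_left hδh (by positivity)
        have e2 : ((|v (-T)| + B * N) / A0) * h = h * |v (-T)| / A0 + (h * N / A0) * B := by
          field_simp
        have e3 : (h * N / A0) * B ≤ (1 / 2) * B := by
          refine mul_le_mul_of_nonneg_right ?_ hB0
          rw [div_le_iff₀ hA0]; linarith
        rw [hBU]; linarith
      refine ⟨fun σ hσ => le_trans (hu σ hσ) hBfin, fun σ hσ => ?_⟩
      have h4 : B * N ≤ BU * N := mul_le_mul_of_nonneg_right hBfin hN0
      have := hv σ hσ
      rw [hBV]; nlinarith
    set β := sSup E with hβ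
    have hβ0 : 0 ≤ β := le_csSup hEbdd hE0
    have hβh : β ≤ h := csSup_le ⟨0, hE0⟩ fun x hx => hx.1.2
    have hβE : β ∈ E := by
      refine ⟨⟨hβ0, hβh⟩, ?_⟩
      rcases eq_or_lt_of_le hβ0 with heq0 | hβpos
      · have : -T - β = -T := by rw [← heq0]; ring
        rw [this]; exact hPT
      · rw [hPiff _ (by linarith)]
        have hsplit : Ioc (-T - β) 0 = Ioc (-T - β) (-T) ∪ Ioc (-T) 0 :=
          (Ioc_union_Ioc_eq_Ioc (by linarith) (by linarith)).symm
        rw [hsplit]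
        refine IntegrableOn.union ?_ ((hPiff _ (by linarith)).1 hPT)
        refine aux_integrableOn_of_bound (M := BV / A0) (hvolfin _ _) hfm
          ((ae_restrict_iff' measurableSet_Ioc).2 (Eventually.of_forall ?_))
        intro x hx
        obtain ⟨δ', hδ'E, hδ'lt⟩ := exists_lt_of_lt_csSup ⟨0, hE0⟩
          (show -x - T < β by linarith [hx.1])
        have hb := (key δ' hδ'E).2 x ⟨by linarith, hx.2⟩
        calc |f x| ≤ |v x| / A0 := habs x
          _ ≤ BV / A0 := by gcongr
    have hβeqh : β = h := by
      by_contra hne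
      have hβlt : β < h := lt_of_le_of_ne hβh hne
      have hjunk : ∀ σ ∈ Ico (-T - h) (-T - β), u σ = u 0 := by
        intro σ hσ
        have hnP : ¬IntervalIntegrable f volume 0 σ := by
          intro hP
          have hmem : -σ - T ∈ E := by
            refine ⟨⟨by linarith [hσ.2], by linarith [hσ.1]⟩, ?_⟩
            rw [show -T - (-σ - T) = σ by ring]
            exact hP
          have := le_csSup hEbdd hmem
          linarith [hσ.2]
        rw [hequ σ, intervalIntegral.integral_undef hnP, add_zero]
      have huβ : |u (-T - β)| ≤ BU := (key β hβE).1 (-T - β) ⟨le_rfl, by linarith⟩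
      have hub2 : ∀ x ∈ Icc (-T - h) (-T - β), |u x| ≤ |u 0| + BU := by
        intro x hx
        rcases lt_or_eq_of_le hx.2 with hlt | heq
        · rw [hjunk x ⟨hx.1, hlt⟩]
          linarith [abs_nonneg (u 0), hBU0]
        · rw [heq]
          linarith [abs_nonneg (u 0), huβ]
      have hvβ : |v (-T - β)| ≤ BV := (key β hβE).2 (-T - β) ⟨le_rfl, by linarith⟩
      have hv2 : ∀ σ ∈ Ioc (-T - h) (-T - β), |v σ| ≤ BV + (|u 0| + BU) * N := by
        intro σ hσ
        have hd := hvdiff σ (-T - β) (|u 0| + BU) (by positivity) hσ.2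
          (by linarith [hσ.1]) fun x hx => hub2 x ⟨by linarith [hσ.1, hx.1], hx.2⟩
        rw [abs_sub_comm] at hd
        have := abs_sub_abs_le_abs_sub (v σ) (v (-T - β))
        linarith
      have hPh : IntervalIntegrable f volume 0 (-T - h) := by
        rw [hPiff _ (by linarith)]
        have hsplit : Ioc (-T - h) 0 = Ioc (-T - h) (-T - β) ∪ Ioc (-T - β) 0 :=
          (Ioc_union_Ioc_eq_Ioc (by linarith) (by linarith)).symm
        rw [hsplit]
        refine IntegrableOn.union ?_ ((hPiff _ (by linarith)).1 hβE.2)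
        refine aux_integrableOn_of_bound (M := (BV + (|u 0| + BU) * N) / A0) (hvolfin _ _) hfm
          ((ae_restrict_iff' measurableSet_Ioc).2 (Eventually.of_forall ?_))
        intro x hx
        calc |f x| ≤ |v x| / A0 := habs x
          _ ≤ (BV + (|u 0| + BU) * N) / A0 := by
              have := hv2 x hx; gcongr
      have : h ∈ E := ⟨⟨hh0.le, le_rfl⟩, hPh⟩
      linarith [le_csSup hEbdd this]
    intro δ hδ0 hδh
    exact (hdown β hβE δ hδ0 (by linarith [hβeqh])).2
  -- induction
  have main : ∀ n : ℕ, ∀ t : ℝ, |t| ≤ (n : ℝ) * h → IntervalIntegrable f volume 0 t := by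
    intro n
    induction n with
    | zero =>
      intro t ht
      simp only [Nat.cast_zero, zero_mul] at ht
      have ht0 : t = 0 := abs_nonpos_iff.1 ht
      subst ht0
      have : Set.uIoc (0:ℝ) 0 = ∅ := by rw [Set.uIoc_of_le le_rfl]; exact Ioc_self 0
      rw [intervalIntegrable_iff, this]
      exact integrableOn_empty
    | succ n ih =>
      intro t ht
      push_cast at ht
      rcases le_or_gt |t| ((n : ℝ) * h) with hle | hgt
      · exact ih t hle
      rcases le_total 0 t with h2 | h2
      · have habs2 : |t| = t := abs_of_nonneg h2
        have hPn : IntervalIntegrable f volume 0 ((n : ℝ) * h) :=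
          ih _ (by rw [abs_of_nonneg (by positivity)])
        have := stepR ((n : ℝ) * h) (by positivity) hPn (t - (n : ℝ) * h)
          (by rw [habs2] at hgt; linarith) (by rw [habs2] at ht; linarith)
        rwa [show (n : ℝ) * h + (t - (n : ℝ) * h) = t by ring] at this
      · have habs2 : |t| = -t := abs_of_nonpos h2
        have hPn : IntervalIntegrable f volume 0 (-((n : ℝ) * h)) :=
          ih _ (by rw [abs_neg, abs_of_nonneg (by positivity)])
        have := stepL ((n : ℝ) * h) (by positivity) hPn (-t - (n : ℝ) * h)
          (by rw [habs2] at hgt; linarith) (by rw [habs2] at ht; linarith)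
        rwa [show -((n : ℝ) * h) - (-t - (n : ℝ) * h) = t by ring] at this
  intro t
  obtain ⟨n, hn⟩ := exists_nat_ge (|t| / h)
  refine main n t ?_
  rw [div_le_iff₀ hh0] at hn
  linarith


end AuxLemmas

/-- Control of the quasi-derivative by the solution. -/

theorem quasi_derivative_control
    (ρ : MeasureTheory.Measure ℝ) (hρ0 : ρ ≠ 0) (hρfin : unifE ρ < ⊤)
    (hρper : ∃ p : ℝ, IsPeriod ρ p)
    (a : ℝ → ℝ) (μp μm : MeasureTheory.Measure ℝ) (hAM : AM ρ a μp μm)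
    (u v : ℝ → ℝ) (hsol : IsSolution0 a μp μm u v)
    (r : ℝ) (hr : 0 < r)
    (C : ℝ)
    (hC : C = max (2 * supNorm a / r) (unifNorm (μp + μm) / 2) +
      (⌈r⌉ : ℝ) * unifNorm (μp + μm)) :
    ∀ α : ℝ, sSup ((fun t => |v t|) '' Set.Ioc α (α + r)) ≤
      C * sSup ((fun t => |u t|) '' Set.Ioc α (α + r)) := by
  intro α
  have hma := hAM.meas_a
  have hmu := hsol.meas_u
  have hmv := hsol.meas_v
  set A0 := ⨅ x : ℝ, a x with hA0def
  have hA0 : 0 < A0 := hAM.inf_pos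
  have hbddB : BddBelow (Set.range a) := by
    by_contra hcon
    rw [hA0def] at hA0
    rw [Real.iInf_of_not_bddBelow hcon] at hA0
    exact lt_irrefl 0 hA0
  have haA0 : ∀ s, A0 ≤ a s := fun s => ciInf_le hbddB s
  set A := supNorm a with hAdef
  have haA : ∀ s, a s ≤ A := fun s => le_csSup hAM.bddAbove ⟨s, rfl⟩
  have hA : 0 < A := lt_of_lt_of_le hA0 (le_trans (haA0 0) (haA 0))
  set N := unifNorm (μp + μm) with hNdef
  have hN0 : 0 ≤ N := unifNorm_nonneg _
  set f := fun s => v s / a s with hfdef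
  have hfm : Measurable f := hmv.div hma
  have hunif := hAM.unif_lt_top
  have hνfin : ∀ s t : ℝ, (μp + μm) (Ioc s t) < ⊤ := fun s t => measure_Ioc_lt_top' hunif s t
  have hpfin : ∀ s t : ℝ, μp (Ioc s t) < ⊤ := fun s t =>
    lt_of_le_of_lt (Measure.le_iff'.1 (Measure.le_add_right le_rfl) _) (hνfin s t)
  have hmfin : ∀ s t : ℝ, μm (Ioc s t) < ⊤ := fun s t =>
    lt_of_le_of_lt (Measure.le_iff'.1 (Measure.le_add_left le_rfl) _) (hνfin s t)
  have hP := solution_global_integrable a u v μp μm A0 hA0 haA0 hmu hfm hunif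
    hsol.eq_u hsol.eq_v
  have hdiff : ∀ s t : ℝ, u t - u s = ∫ x in s..t, f x := by
    intro s t
    rw [hsol.eq_u t, hsol.eq_u s]
    have := intervalIntegral.integral_interval_sub_left (hP t) (hP s)
    linarith
  have hrle : α ≤ α + r := by linarith
  have hQ : IntegrableOn f (Ioc α (α + r)) volume := by
    have := (hP α).symm.trans (hP (α + r))
    rwa [intervalIntegrable_iff_integrableOn_Ioc_of_le hrle] at this
  have hQabs : IntegrableOn (fun x => |f x|) (Ioc α (α + r)) volume := hQ.abs
  set Bu := |u α| + ∫ x in Ioc α (α + r), |f x| with hBudef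
  have hu_bd : ∀ t ∈ Ioc α (α + r), |u t| ≤ Bu := by
    intro t htI
    have h1 : |∫ x in α..t, f x| ≤ ∫ x in Ioc α (α + r), |f x| := by
      rw [intervalIntegral.integral_of_le htI.1.le]
      refine le_trans ?_ (setIntegral_mono_set hQabs
        (Eventually.of_forall fun x => abs_nonneg _)
        (HasSubset.Subset.eventuallyLE (Ioc_subset_Ioc_right htI.2)))
      exact (norm_integral_le_integral_norm f).trans_eq (by simp [Real.norm_eq_abs])
    have h2 : |u t| ≤ |u α| + |∫ x in α..t, f x| := by
      rw [show u t = u α + (u t - u α) by ring, hdiff α t]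
      exact abs_add_le _ _
    rw [hBudef]; linarith
  have hbdd : BddAbove ((fun t => |u t|) '' Set.Ioc α (α + r)) := by
    refine ⟨Bu, ?_⟩
    rintro y ⟨t, htI, rfl⟩
    exact hu_bd t htI
  set M := sSup ((fun t => |u t|) '' Set.Ioc α (α + r)) with hMdef
  have hMle : ∀ t ∈ Ioc α (α + r), |u t| ≤ M := fun t ht => le_csSup hbdd ⟨t, ht, rfl⟩
  have hM0 : 0 ≤ M := le_trans (abs_nonneg _) (hMle (α + r) ⟨by linarith, le_rfl⟩)
  set Bv := |v α| + M * ((μp + μm) (Ioc α (α + r))).toReal with hBvdef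
  have hv_bd : ∀ t ∈ Ioc α (α + r), |v t| ≤ Bv := by
    intro t htI
    have heq := hsol.eq_v α t htI.1.le
    have hb := lm_bound hmu (hpfin α t) (hmfin α t)
      (fun x hx => hMle x ⟨hx.1, le_trans hx.2 htI.2⟩)
    rw [← heq] at hb
    have h2 : ((μp + μm) (Ioc α t)).toReal ≤ ((μp + μm) (Ioc α (α + r))).toReal :=
      ENNReal.toReal_mono (hνfin α (α + r)).ne (measure_mono (Ioc_subset_Ioc_right htI.2))
    have h3 : M * ((μp + μm) (Ioc α t)).toReal ≤ M * ((μp + μm) (Ioc α (α + r))).toReal :=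
      mul_le_mul_of_nonneg_left h2 hM0
    have h4 := abs_sub_abs_le_abs_sub (v t) (v α)
    rw [hBvdef]; linarith
  set K := max (2 * A / r) (N / 2) with hKdef
  have hK1 : 2 * A / r ≤ K := le_max_left _ _
  have hK2 : N / 2 ≤ K := le_max_right _ _
  have hKpos : 0 < K := lt_of_lt_of_le (by positivity) hK1
  have hceil0 : (0:ℝ) ≤ (⌈r⌉ : ℝ) := by
    have := Int.ceil_nonneg hr.le
    exact_mod_cast this
  -- the neg system
  have hfmneg : Measurable (fun s => (fun x => -v x) s / a s) := by
    have he : (fun s => (fun x => -v x) s / a s) = fun s => -(f s) := by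
      funext s; rw [hfdef]; exact neg_div _ _
    rw [he]; exact hfm.neg
  have hdiffneg : ∀ s t : ℝ, (fun x => -u x) t - (fun x => -u x) s
      = ∫ x in s..t, (fun x => -v x) x / a x := by
    intro s t
    show -u t - -u s = ∫ x in s..t, -v x / a x
    have h5 : ∫ x in s..t, -v x / a x = -∫ x in s..t, f x := by
      have he : (fun x => -v x / a x) = fun x => -(f x) := by
        funext x; exact neg_div _ _
      rw [he]
      exact intervalIntegral.integral_neg
    rw [h5]
    have := hdiff s t
    linarith
  have heqvneg : ∀ s t : ℝ, s ≤ t → (fun x => -v x) t - (fun x => -v x) s =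
      (∫ x in Ioc s t, (fun x => -u x) x ∂μp) - ∫ x in Ioc s t, (fun x => -u x) x ∂μm := by
    intro s t hst
    simp only [integral_neg]
    have := hsol.eq_v s t hst
    linarith
  have hsmall : ∃ s ∈ Ioc α (α + r), |v s| ≤ K * M := by
    by_contra hcon
    push_neg at hcon
    by_cases hpos : ∃ s1 ∈ Ioc α (α + r), K * M < v s1
    · by_cases hneg2 : ∃ s2 ∈ Ioc α (α + r), v s2 < -(K * M)
      · obtain ⟨s1, h1, hv1⟩ := hpos
        obtain ⟨s2, h2, hv2⟩ := hneg2
        rcases lt_trichotomy s1 s2 with hlt | heq | hgt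
        · exact mixedCase μp μm hunif u v hmu hsol.eq_v α r M K hM0 hMle hKpos
            (by rw [← hNdef]; linarith) hcon s1 s2 h1 h2 hlt hv1 hv2
        · exfalso
          rw [heq] at hv1
          have := mul_nonneg hKpos.le hM0
          linarith
        · refine mixedCase μp μm hunif (fun x => -u x) (fun x => -v x) hmu.neg heqvneg
            α r M K hM0 (fun t ht => by simpa using hMle t ht) hKpos
            (by rw [← hNdef]; linarith) (fun s hs => by simpa using hcon s hs)
            s2 s1 h2 h1 hgt (by show K * M < -v s2; linarith)
            (by show -v s1 < -(K * M); linarith)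
      · push_neg at hneg2
        refine posCase a u v A0 A hA0 hA haA0 haA hfm hdiff α r M K Bv hr hM0 hMle
          hv_bd hK1 ?_
        intro s hs
        rcases lt_abs.1 (hcon s hs) with h | h
        · exact h
        · exfalso
          have := hneg2 s hs
          linarith
    · push_neg at hpos
      refine posCase a (fun x => -u x) (fun x => -v x) A0 A hA0 hA haA0 haA hfmneg
        hdiffneg α r M K Bv hr hM0 (fun t ht => by simpa using hMle t ht)
        (fun t ht => by simpa using hv_bd t ht) hK1 ?_
      intro s hs
      rcases lt_abs.1 (hcon s hs) with h | h
      · exfalso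
        have := hpos s hs
        linarith
      · simpa using h
  obtain ⟨s0, hs0I, hs0⟩ := hsmall
  have hcover : ∀ x y : ℝ, x ∈ Ioc α (α + r) → y ∈ Ioc α (α + r) → x ≤ y →
      |v y - v x| ≤ M * ((⌈r⌉ : ℝ) * N) := by
    intro x y hx hy hxy
    rw [hsol.eq_v x y hxy]
    refine le_trans (lm_bound hmu (hpfin x y) (hmfin x y)
      (fun z hz => hMle z ⟨lt_of_lt_of_le hx.1 hz.1.le, le_trans hz.2 hy.2⟩)) ?_
    refine mul_le_mul_of_nonneg_left ?_ hM0
    have hyx : y ≤ x + ((⌈r⌉.toNat : ℕ) : ℝ) := by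
      have hc1 : ((⌈r⌉.toNat : ℕ) : ℝ) = ((⌈r⌉ : ℤ) : ℝ) := by
        have h9 := Int.toNat_of_nonneg (Int.ceil_nonneg hr.le)
        exact_mod_cast congrArg (Int.cast : ℤ → ℝ) h9
      rw [hc1]
      have := Int.le_ceil r
      have hyr : y ≤ α + r := hy.2
      have hxα : α < x := hx.1
      linarith
    have hn := toReal_measure_Ioc_le_mul hunif ⌈r⌉.toNat hyx
    have hc1 : ((⌈r⌉.toNat : ℕ) : ℝ) = ((⌈r⌉ : ℤ) : ℝ) := by
      have h9 := Int.toNat_of_nonneg (Int.ceil_nonneg hr.le)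
      exact_mod_cast congrArg (Int.cast : ℤ → ℝ) h9
    rw [hc1] at hn
    rw [← hNdef] at hn
    exact hn
  have hfinal : ∀ t ∈ Ioc α (α + r), |v t| ≤ C * M := by
    intro t htI
    have hCM : C * M = K * M + M * ((⌈r⌉ : ℝ) * N) := by rw [hC]; ring
    rcases le_total s0 t with hst | hst
    · have h5 := hcover s0 t hs0I htI hst
      have h4 := abs_sub_abs_le_abs_sub (v t) (v s0)
      rw [hCM]; linarith
    · have h5 := hcover t s0 htI hs0I hst
      rw [abs_sub_comm] at h5
      have h4 := abs_sub_abs_le_abs_sub (v t) (v s0)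
      rw [hCM]; linarith
  refine Real.sSup_le ?_ ?_
  · rintro y ⟨t, htI, rfl⟩
    exact hfinal t htI
  · have hC0 : 0 ≤ C := by
      rw [hC]
      have : 0 ≤ (⌈r⌉ : ℝ) * N := mul_nonneg hceil0 hN0
      have h6 : 2 * A / r ≤ max (2 * A / r) (N / 2) := le_max_left _ _
      have h7 : 0 < 2 * A / r := by positivity
      linarith
    exact mul_nonneg hC0 hM0
end
end

section
/- Vanishing at infinity for almost-translation-invariant L_p functions: Let ρ be a nonzero nonnegative Borel measure on ℝ with sup_{t∈ℝ} ρ((t,t+1]) < ∞ which is periodic (there is p₀ ≠ 0 with ρ(B + p₀) = ρ(B) for every Borel set B). Let p ∈ [1, ∞) and let u : ℝ → ℂ be Borel measurable and right-continuous with ∫_ℝ |u|^p dρ < ∞. Assume that for every r > 0 one has |u(t + r) − u(t)| → 0 as |t| → ∞. Then u(t) → 0 as |t| → ∞. -/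
open MeasureTheory Set Filter

noncomputable section

private lemma aux_shift_int (ρ : MeasureTheory.Measure ℝ) (p₀ : ℝ)
    (hper : ∀ B : Set ℝ, ρ ((fun x => x - p₀) ⁻¹' B) = ρ B) :
    ∀ (m : ℤ) (B : Set ℝ), ρ ((fun x => x - (m : ℝ) * p₀) ⁻¹' B) = ρ B := by
  have hper' : ∀ B : Set ℝ, ρ ((fun x => x + p₀) ⁻¹' B) = ρ B := by
    intro B
    have h := hper ((fun x => x + p₀) ⁻¹' B)
    have he : (fun x : ℝ => x - p₀) ⁻¹' ((fun x : ℝ => x + p₀) ⁻¹' B) = B := by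
      ext x; simp [Set.mem_preimage]
    rw [he] at h
    exact h.symm
  intro m
  induction m using Int.induction_on with
  | zero => intro B; simpa using rfl
  | succ k ih =>
      intro B
      have hcomp : (fun x : ℝ => x - ((k : ℤ) + 1 : ℤ) * p₀) ⁻¹' B
          = (fun x : ℝ => x - (k : ℝ) * p₀) ⁻¹' ((fun x : ℝ => x - p₀) ⁻¹' B) := by
        ext x
        simp only [Set.mem_preimage]
        rw [show x - (((k : ℤ) + 1 : ℤ) : ℝ) * p₀ = x - (k : ℝ) * p₀ - p₀ by push_cast; ring]
      calc ρ ((fun x : ℝ => x - (((k : ℤ) + 1 : ℤ) : ℝ) * p₀) ⁻¹' B)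
          = ρ ((fun x : ℝ => x - (k : ℝ) * p₀) ⁻¹' ((fun x : ℝ => x - p₀) ⁻¹' B)) := by
            rw [← hcomp]
        _ = ρ ((fun x : ℝ => x - p₀) ⁻¹' B) := ih _
        _ = ρ B := hper B
  | pred k ih =>
      intro B
      have hcomp : (fun x : ℝ => x - ((-(k : ℤ) - 1 : ℤ) : ℝ) * p₀) ⁻¹' B
          = (fun x : ℝ => x - ((-(k : ℤ) : ℤ) : ℝ) * p₀) ⁻¹' ((fun x : ℝ => x + p₀) ⁻¹' B) := by
        ext x
        simp only [Set.mem_preimage]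
        rw [show x - ((-(k : ℤ) - 1 : ℤ) : ℝ) * p₀ = x + p₀ - ((-(k : ℤ) : ℤ) : ℝ) * p₀ by push_cast; ring, show x + p₀ - ((-(k : ℤ) : ℤ) : ℝ) * p₀ = x - ((-(k : ℤ) : ℤ) : ℝ) * p₀ + p₀ by ring]
      calc ρ ((fun x : ℝ => x - ((-(k : ℤ) - 1 : ℤ) : ℝ) * p₀) ⁻¹' B)
          = ρ ((fun x : ℝ => x - ((-(k : ℤ) : ℤ) : ℝ) * p₀) ⁻¹' ((fun x : ℝ => x + p₀) ⁻¹' B)) := by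
            rw [← hcomp]
        _ = ρ ((fun x : ℝ => x + p₀) ⁻¹' B) := ih _
        _ = ρ B := hper' B

private lemma aux_exists_small_interval (ρ : MeasureTheory.Measure ℝ) (hρ0 : ρ ≠ 0)
    {δ : ℝ} (hδ : 0 < δ) : ∃ a : ℝ, ρ (Set.Ioc a (a + δ)) ≠ 0 := by
  by_contra h
  push_neg at h
  apply hρ0
  have hIoc : ∀ a b : ℝ, ρ (Set.Ioc a b) = 0 := by
    intro a b
    have hsub : Set.Ioc a b ⊆ ⋃ j : ℕ, Set.Ioc (b - ((j : ℝ) + 1) * δ) (b - ((j : ℝ) + 1) * δ + δ) := by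
      intro x hx
      obtain ⟨hax, hxb⟩ := hx
      have h0 : (0 : ℝ) ≤ (b - x) / δ := div_nonneg (by linarith) hδ.le
      refine Set.mem_iUnion.mpr ⟨⌊(b - x) / δ⌋.toNat, ?_⟩
      have hj : ((⌊(b - x) / δ⌋.toNat : ℕ) : ℝ) = ((⌊(b - x) / δ⌋ : ℤ) : ℝ) := by
        norm_cast
        exact Int.toNat_of_nonneg (Int.floor_nonneg.mpr h0)
      have h1 : ((⌊(b - x) / δ⌋ : ℤ) : ℝ) ≤ (b - x) / δ := Int.floor_le _
      have h2 : (b - x) / δ < ((⌊(b - x) / δ⌋ : ℤ) : ℝ) + 1 := Int.lt_floor_add_one _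
      have h1' : ((⌊(b - x) / δ⌋ : ℤ) : ℝ) * δ ≤ b - x := by
        rw [← le_div_iff₀ hδ]; exact h1
      have h2' : b - x < (((⌊(b - x) / δ⌋ : ℤ) : ℝ) + 1) * δ := by
        rw [← div_lt_iff₀ hδ]; exact h2
      constructor
      · rw [hj]; nlinarith
      · rw [hj]; nlinarith
    have : ρ (⋃ j : ℕ, Set.Ioc (b - ((j : ℝ) + 1) * δ) (b - ((j : ℝ) + 1) * δ + δ)) = 0 :=
      measure_iUnion_null fun j => h _
    exact le_antisymm (le_trans (measure_mono hsub) this.le) (zero_le)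
  have huniv : ρ Set.univ = 0 := by
    have hsub : (Set.univ : Set ℝ) ⊆ ⋃ n : ℕ, Set.Ioc (-(n : ℝ)) (n : ℝ) := by
      intro x _
      refine Set.mem_iUnion.mpr ⟨⌈|x|⌉₊ + 1, ?_⟩
      have h1 : |x| ≤ (⌈|x|⌉₊ : ℝ) := Nat.le_ceil _
      have h2 : (⌈|x|⌉₊ : ℝ) < ((⌈|x|⌉₊ + 1 : ℕ) : ℝ) := by push_cast; linarith
      constructor
      · have := neg_abs_le x; push_cast; linarith
      · have := le_abs_self x; push_cast; linarith
    have : ρ (⋃ n : ℕ, Set.Ioc (-(n : ℝ)) (n : ℝ)) = 0 :=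
      measure_iUnion_null fun n => hIoc _ _
    exact le_antisymm (le_trans (measure_mono hsub) this.le) (zero_le)
  exact MeasureTheory.Measure.measure_univ_eq_zero.mp huniv

set_option maxHeartbeats 2000000 in
/-- Vanishing at infinity for almost-translation-invariant `L_p` functions. -/
theorem vanishing_at_infinity
    (ρ : MeasureTheory.Measure ℝ) (hρ0 : ρ ≠ 0) (hρfin : unifE ρ < ⊤)
    (hρper : ∃ p₀ : ℝ, IsPeriod ρ p₀)
    (q : ℝ) (hq : 1 ≤ q)
    (u : ℝ → ℂ) (hu_meas : Measurable u)
    (hu_rc : ∀ t : ℝ, Tendsto u (nhdsWithin t (Set.Ioi t)) (nhds (u t)))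
    (hLp : (∫⁻ x, ENNReal.ofReal (‖u x‖ ^ q) ∂ρ) < ⊤)
    (htrans : ∀ r : ℝ, 0 < r →
      Tendsto (fun t => ‖u (t + r) - u t‖) (Filter.cocompact ℝ) (nhds 0)) :
    Tendsto u (Filter.cocompact ℝ) (nhds 0) := by
  by_contra hcon
  -- uniform smallness of fixed-shift differences at infinity
  have hss : ∀ r : ℝ, 0 < r → ∀ γ' : ℝ, 0 < γ' →
      ∃ M : ℝ, ∀ t : ℝ, M ≤ |t| → ‖u (t + r) - u t‖ ≤ γ' := by
    intro r hr γ' hγ'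
    have h2 := Metric.tendsto_nhds.mp (htrans r hr) γ' hγ'
    rw [Filter.eventually_iff] at h2
    obtain ⟨K, hK, hKsub⟩ := Filter.mem_cocompact.mp h2
    obtain ⟨R, hR⟩ := hK.isBounded.subset_closedBall 0
    refine ⟨R + 1, fun t ht => ?_⟩
    have htK : t ∈ Kᶜ := by
      rw [Set.mem_compl_iff]
      intro h'
      have h'' := hR h'
      simp only [Metric.mem_closedBall, Real.dist_eq, sub_zero] at h''
      linarith
    have hfin := hKsub htK
    rw [Set.mem_setOf_eq, Real.dist_0_eq_abs, abs_norm] at hfin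
    linarith
  -- negation: frequently big values
  have hnot : ¬ (∀ ε : ℝ, 0 < ε → ∃ M : ℝ, ∀ t : ℝ, M < |t| → ‖u t‖ < ε) := by
    intro h
    apply hcon
    rw [Metric.tendsto_nhds]
    intro ε hε
    obtain ⟨M, hM⟩ := h ε hε
    have hmem : {t : ℝ | M < |t|} ∈ cocompact ℝ := by
      rw [Filter.mem_cocompact]
      refine ⟨Metric.closedBall 0 M, isCompact_closedBall 0 M, fun t ht => ?_⟩
      simp only [Set.mem_compl_iff, Metric.mem_closedBall, Real.dist_eq, sub_zero, not_le] at ht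
      exact ht
    filter_upwards [hmem] with t ht
    rw [dist_zero_right]
    exact hM t ht
  push_neg at hnot
  obtain ⟨ε, hε, Hfreq⟩ := hnot
  -- period setup
  obtain ⟨p₀, hp₀, hper⟩ := hρper
  have hshift := aux_shift_int ρ p₀ hper
  set P : ℝ := |p₀| with hPdef
  have hPpos : 0 < P := abs_pos.mpr hp₀
  have key : ∀ c : ℝ, (∃ m' : ℤ, c = (m' : ℝ) * p₀) →
      ∀ a b : ℝ, ρ (Set.Ioc (a + c) (b + c)) = ρ (Set.Ioc a b) := by
    rintro c ⟨m', rfl⟩ a b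
    have h := hshift m' (Set.Ioc a b)
    have hpre : (fun x : ℝ => x - (m' : ℝ) * p₀) ⁻¹' (Set.Ioc a b)
        = Set.Ioc (a + (m' : ℝ) * p₀) (b + (m' : ℝ) * p₀) := by
      ext x
      simp only [Set.mem_preimage, Set.mem_Ioc]
      constructor <;> rintro ⟨h1, h2⟩ <;> exact ⟨by linarith, by linarith⟩
    rw [hpre] at h
    exact h
  have hshiftP : ∀ (m : ℤ) (a b : ℝ),
      ρ (Set.Ioc (a + (m : ℝ) * P) (b + (m : ℝ) * P)) = ρ (Set.Ioc a b) := by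
    intro m a b
    apply key
    rcases abs_cases p₀ with ⟨h1, _⟩ | ⟨h1, _⟩
    · exact ⟨m, by rw [hPdef, h1]⟩
    · refine ⟨-m, ?_⟩
      rw [hPdef, h1]
      push_cast
      ring
  -- Baire category step
  set γ : ℝ := ε / 16 with hγdef
  have hγ : 0 < γ := by rw [hγdef]; linarith
  set A : ℕ → Set ℝ := fun M =>
    {s : ℝ | s ∈ Set.Icc 1 2 ∧ ∀ t : ℝ, (M : ℝ) ≤ |t| → ‖u (t + s) - u t‖ ≤ γ} with hAdef
  set C : ℕ → Set ℝ := fun M => closure (A M) ∪ (Set.Iic 1 ∪ Set.Ici 2) with hCdef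
  have hCclosed : ∀ M : ℕ, IsClosed (C M) :=
    fun M => isClosed_closure.union (isClosed_Iic.union isClosed_Ici)
  have hCcover : ⋃ M : ℕ, C M = Set.univ := by
    rw [Set.eq_univ_iff_forall]
    intro s
    rcases le_or_gt s 1 with h | h1
    · exact Set.mem_iUnion.mpr ⟨0, Or.inr (Or.inl h)⟩
    rcases le_or_gt 2 s with h | h2
    · exact Set.mem_iUnion.mpr ⟨0, Or.inr (Or.inr h)⟩
    obtain ⟨M, hM⟩ := hss s (by linarith) γ hγ
    refine Set.mem_iUnion.mpr ⟨⌈M⌉₊, Or.inl (subset_closure ?_)⟩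
    exact ⟨⟨h1.le, h2.le⟩, fun t ht => hM t (le_trans (Nat.le_ceil M) ht)⟩
  have hdense := dense_iUnion_interior_of_closed hCclosed hCcover
  obtain ⟨y, hyU, hy12⟩ := hdense.exists_mem_open isOpen_Ioo
    (⟨(3 : ℝ)/2, by norm_num⟩ : (Set.Ioo (1:ℝ) 2).Nonempty)
  obtain ⟨M₀, hyM⟩ := Set.mem_iUnion.mp hyU
  obtain ⟨θ₀, hθ₀pos, hball₀⟩ := Metric.mem_nhds_iff.mp (mem_interior_iff_mem_nhds.mp hyM)
  obtain ⟨hy1, hy2⟩ := hy12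
  set θ : ℝ := min (θ₀/2) (min ((y-1)/2) (min ((2-y)/2) (1/4))) with hθdef
  have hθpos : 0 < θ :=
    lt_min (by linarith) (lt_min (by linarith) (lt_min (by linarith) (by norm_num)))
  have hθ14 : θ ≤ 1/4 :=
    le_trans (min_le_right _ _) (le_trans (min_le_right _ _) (min_le_right _ _))
  have hθy1 : θ ≤ (y-1)/2 := le_trans (min_le_right _ _) (min_le_left _ _)
  have hθy2 : θ ≤ (2-y)/2 :=
    le_trans (min_le_right _ _) (le_trans (min_le_right _ _) (min_le_left _ _))
  have hθθ₀ : θ < θ₀ := lt_of_le_of_lt (min_le_left _ _) (by linarith)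
  have hclosA : Set.Ioo (y - θ) (y + θ) ⊆ closure (A M₀) := by
    intro s hs
    obtain ⟨hsa, hsb⟩ := hs
    have hsball : s ∈ Metric.ball y θ₀ := by
      rw [Metric.mem_ball, Real.dist_eq, abs_lt]
      constructor <;> linarith
    have hsC := hball₀ hsball
    have hs1 : 1 < s := by linarith
    have hs2 : s < 2 := by linarith
    rcases hsC with h | h
    · exact h
    · rcases h with h | h
      · rw [Set.mem_Iic] at h; linarith
      · rw [Set.mem_Ici] at h; linarith
  have hgood : ∀ s : ℝ, y - θ < s → s < y + θ → ∀ t : ℝ, (M₀ : ℝ) ≤ |t| →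
      ‖u (t + s) - u t‖ ≤ γ := by
    intro s hs1 hs2 t ht
    by_contra hbad
    push_neg at hbad
    have hcont : Tendsto (fun x => ‖u x - u t‖) (nhdsWithin (t+s) (Set.Ioi (t+s)))
        (nhds (‖u (t+s) - u t‖)) := ((hu_rc (t+s)).sub tendsto_const_nhds).norm
    have hev : ∀ᶠ x in nhdsWithin (t+s) (Set.Ioi (t+s)), γ < ‖u x - u t‖ :=
      hcont.eventually (eventually_gt_nhds hbad)
    have hfreq : ∃ᶠ x in nhdsWithin (t+s) (Set.Ioi (t+s)), x - t ∈ A M₀ := by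
      rw [Filter.frequently_iff]
      intro U hU
      obtain ⟨b, hb, hsub⟩ :=
        (mem_nhdsGT_iff_exists_Ioo_subset' (show t+s < t+s+1 by linarith)).mp hU
      rw [Set.mem_Ioi] at hb
      set b' : ℝ := min b (t + (y + θ)) with hb'def
      have hb'gt : t + s < b' := lt_min hb (by linarith)
      have hb'le : b' ≤ t + (y + θ) := min_le_right _ _
      have hb'leb : b' ≤ b := min_le_left _ _
      have hzc : (t+s+b')/2 - t ∈ closure (A M₀) := by
        apply hclosA
        constructor
        · linarith
        · linarith
      have hmem : (t+s+b')/2 - t ∈ Set.Ioo s (b' - t) := by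
        constructor <;> linarith
      obtain ⟨w, hwO, hwA⟩ :=
        (mem_closure_iff.mp hzc) (Set.Ioo s (b' - t)) isOpen_Ioo hmem
      rw [Set.mem_Ioo] at hwO
      refine ⟨t + w, hsub ⟨by linarith, by linarith⟩, ?_⟩
      rw [show t + w - t = w by ring]
      exact hwA
    obtain ⟨x, hxA, hxgt⟩ := (hfreq.and_eventually hev).exists
    have hfin := hxA.2 t ht
    rw [show t + (x - t) = x by ring] at hfin
    linarith
  -- asymptotic uniform right-continuity
  have hURC : ∀ t τ : ℝ, (M₀ : ℝ) + 1 ≤ |t| → 0 ≤ τ → τ < θ →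
      ‖u (t + τ) - u t‖ ≤ ε/8 := by
    intro t τ ht hτ0 hτθ
    rcases eq_or_lt_of_le hτ0 with h0 | h0
    · rw [← h0, add_zero, sub_self, norm_zero]; linarith
    · have habs : (M₀ : ℝ) ≤ |t + τ| := by
        have h1 : |t| - |t + τ| ≤ |t - (t + τ)| := abs_sub_abs_le_abs_sub _ _
        have h2 : |t - (t + τ)| = τ := by
          rw [show t - (t + τ) = -τ by ring, abs_neg, abs_of_nonneg hτ0]
        linarith
      have hg1 : ‖u ((t + τ) + (y - θ/2)) - u (t + τ)‖ ≤ γ :=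
        hgood (y - θ/2) (by linarith) (by linarith) (t + τ) habs
      have hg2 : ‖u (t + ((y - θ/2) + τ)) - u t‖ ≤ γ :=
        hgood ((y - θ/2) + τ) (by linarith) (by linarith) t (by linarith)
      rw [show (t + τ) + (y - θ/2) = t + ((y - θ/2) + τ) by ring] at hg1
      have htri := dist_triangle (u (t+τ)) (u (t + ((y - θ/2) + τ))) (u t)
      simp only [dist_eq_norm] at htri
      rw [norm_sub_rev] at hg1
      have : ‖u (t + τ) - u t‖ ≤ γ + γ := by linarith
      rw [hγdef] at this
      linarith
  clear hdense hball₀ hyM hyU hCclosed hCcover hclosA hgood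
  -- small interval with positive mass
  obtain ⟨a, hamass⟩ := aux_exists_small_interval ρ hρ0 (show (0:ℝ) < θ/4 by linarith)
  set η : ENNReal := ρ (Set.Ioc a (a + θ/4)) with hηdef
  -- grid of shifts
  set Nn : ℕ := ⌈(1+P)/(θ/2)⌉₊ + 1 with hNdef
  set rg : ℕ → ℝ := fun i => 1 + (i : ℝ) * (θ/2) with hrgdef
  have hθ2 : (0:ℝ) < θ/2 := by linarith
  clear_value P γ A C θ Nn rg η
  have hgrid : ∀ t : ℝ, ∃ i : ℕ, i < Nn ∧
      η ≤ ρ (Set.Ico (t + rg i) (t + rg i + θ)) := by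
    intro t
    obtain ⟨m, hmdef⟩ : ∃ m : ℤ, m = ⌊(t + 2 - a)/P⌋ + 1 := ⟨_, rfl⟩
    obtain ⟨s, hsdef⟩ : ∃ s : ℝ, s = a + (m : ℝ) * P - t := ⟨_, rfl⟩
    have hms : a + (m : ℝ) * P = t + s := by rw [hsdef]; ring
    have hs1 : 2 < s := by
      have h2 : (t + 2 - a)/P < (m : ℝ) := by
        rw [hmdef]; push_cast; exact Int.lt_floor_add_one _
      have h3 : t + 2 - a < (m : ℝ) * P := by
        rw [div_lt_iff₀ hPpos] at h2; linarith
      rw [hsdef]; linarith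
    have hs2 : s ≤ 2 + P := by
      have h2 : (m : ℝ) - 1 ≤ (t + 2 - a)/P := by
        rw [hmdef]; push_cast; linarith [Int.floor_le ((t + 2 - a)/P)]
      have h3 : ((m : ℝ) - 1) * P ≤ t + 2 - a := by
        rw [← le_div_iff₀ hPpos]; exact h2
      rw [hsdef]; nlinarith
    obtain ⟨i, hidef⟩ : ∃ i : ℕ, i = ⌊(s - 1)/(θ/2)⌋₊ := ⟨_, rfl⟩
    have hist : (0:ℝ) ≤ (s-1)/(θ/2) := div_nonneg (by linarith) hθ2.le
    have hi_le : (i : ℝ) ≤ (s-1)/(θ/2) := by rw [hidef]; exact Nat.floor_le hist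
    have hi_gt : (s-1)/(θ/2) < (i : ℝ) + 1 := by rw [hidef]; exact Nat.lt_floor_add_one _
    have hgi_le : rg i ≤ s := by
      have h4 : (i : ℝ) * (θ/2) ≤ s - 1 := by
        rw [← le_div_iff₀ hθ2]; exact hi_le
      rw [hrgdef]; simp only; linarith
    have hgi_gt : s - θ/2 < rg i := by
      have h4 : s - 1 < ((i : ℝ) + 1) * (θ/2) := by
        rw [← div_lt_iff₀ hθ2]; exact hi_gt
      rw [hrgdef]; simp only; nlinarith
    have hiN : i < Nn := by
      have h4 : (s-1)/(θ/2) ≤ (1+P)/(θ/2) := by gcongr; linarith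
      have h5 : (1+P)/(θ/2) ≤ (⌈(1+P)/(θ/2)⌉₊ : ℝ) := Nat.le_ceil _
      have h6 : (i : ℝ) < (Nn : ℝ) := by
        rw [hNdef]; push_cast; linarith
      exact_mod_cast h6
    refine ⟨i, hiN, ?_⟩
    have hsubset : Set.Ioc (a + (m : ℝ) * P) ((a + θ/4) + (m : ℝ) * P) ⊆
        Set.Ico (t + rg i) (t + rg i + θ) := by
      intro x hx
      obtain ⟨hx1, hx2⟩ := hx
      rw [hms] at hx1
      rw [show (a + θ/4) + (m : ℝ) * P = t + s + θ/4 by rw [hsdef]; ring] at hx2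
      constructor
      · linarith only [hx1, hgi_le]
      · linarith only [hx2, hgi_gt, hθpos]
    calc η = ρ (Set.Ioc (a + (m : ℝ) * P) ((a + θ/4) + (m : ℝ) * P)) := by
          rw [hηdef, hshiftP m a (a + θ/4)]
      _ ≤ ρ (Set.Ico (t + rg i) (t + rg i + θ)) := measure_mono hsubset
  -- uniform fixed-shift bound over the grid
  have hrgpos : ∀ i : ℕ, 0 < rg i := by
    intro i
    rw [hrgdef]
    simp only
    have : (0:ℝ) ≤ (i : ℝ) * (θ/2) := mul_nonneg (Nat.cast_nonneg i) hθ2.le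
    linarith
  choose Mf hMf using fun i : ℕ => hss (rg i) (hrgpos i) (ε/8) (by linarith)
  have hNne : (Finset.range Nn).Nonempty := ⟨0, Finset.mem_range.mpr (by rw [hNdef]; omega)⟩
  set M₂ : ℝ := (Finset.range Nn).sup' hNne Mf with hM2def
  have hM₂ : ∀ i : ℕ, i < Nn → ∀ t : ℝ, M₂ ≤ |t| → ‖u (t + rg i) - u t‖ ≤ ε/8 := by
    intro i hi t ht
    exact hMf i t (le_trans (Finset.le_sup' Mf (Finset.mem_range.mpr hi)) ht)
  set B : ℝ := 1 + (Nn : ℝ) * (θ/2) with hBdef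
  have hB1 : 1 ≤ B := by
    rw [hBdef]
    have : (0:ℝ) ≤ (Nn : ℝ) * (θ/2) := mul_nonneg (Nat.cast_nonneg _) hθ2.le
    linarith
  have hrg_bounds : ∀ i : ℕ, i < Nn → 1 ≤ rg i ∧ rg i ≤ B := by
    intro i hi
    constructor
    · rw [hrgdef]; simp only
      have : (0:ℝ) ≤ (i : ℝ) * (θ/2) := mul_nonneg (Nat.cast_nonneg i) hθ2.le
      linarith
    · have h1 : (i : ℝ) ≤ (Nn : ℝ) := by exact_mod_cast hi.le
      rw [hrgdef, hBdef]; simp only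
      nlinarith
  set M₃ : ℝ := max (max ((M₀ : ℝ) + 1 + B + 1) M₂) 0 + 1 with hM3def
  have hM₃a : (M₀ : ℝ) + 1 + B + 1 ≤ M₃ := by
    rw [hM3def]
    linarith [le_max_left ((M₀ : ℝ) + 1 + B + 1) M₂,
      le_max_left (max ((M₀ : ℝ) + 1 + B + 1) M₂) (0:ℝ)]
  have hM₃b : M₂ ≤ M₃ := by
    rw [hM3def]
    linarith [le_max_right ((M₀ : ℝ) + 1 + B + 1) M₂,
      le_max_left (max ((M₀ : ℝ) + 1 + B + 1) M₂) (0:ℝ)]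
  set step : ℝ := 2*B + 3 with hstepdef
  have hstep0 : 0 ≤ step := by rw [hstepdef]; linarith
  clear_value B M₂ M₃ step
  -- sequence of far-apart big points
  choose g hg1 hg2 using Hfreq
  set T : ℕ → ℝ := fun n =>
    Nat.rec (motive := fun _ => ℝ) (g M₃) (fun _ prev => g (|prev| + step)) n with hTdef
  have hT0 : M₃ < |T 0| := hg1 M₃
  have hTstep : ∀ n : ℕ, |T n| + step < |T (n+1)| := fun n => hg1 (|T n| + step)
  have hTbig : ∀ n : ℕ, ε ≤ ‖u (T n)‖ := by
    intro n
    cases n with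
    | zero => exact hg2 M₃
    | succ k => exact hg2 (|T k| + step)
  have hTlarge : ∀ n : ℕ, M₃ < |T n| := by
    intro n
    induction n with
    | zero => exact hT0
    | succ k ih => linarith [hTstep k]
  have hTmono : ∀ m n : ℕ, m < n → |T m| + step ≤ |T n| := by
    intro m n hmn
    induction n with
    | zero => exact absurd hmn (Nat.not_lt_zero m)
    | succ k ih =>
        rcases Nat.lt_succ_iff_lt_or_eq.mp hmn with h | h
        · have := ih h
          linarith [hTstep k]
        · subst h
          exact (hTstep m).le
  -- windows
  choose ig hig hmass using fun n : ℕ => hgrid (T n)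
  set W : ℕ → Set ℝ := fun n => Set.Ico (T n + rg (ig n)) (T n + rg (ig n) + θ) with hWdef
  have hWsub : ∀ k : ℕ, ∀ x ∈ W k, |x - T k| ≤ B + 1 := by
    intro k x hx
    obtain ⟨h1, h2⟩ := hx
    obtain ⟨hr1, hr2⟩ := hrg_bounds (ig k) (hig k)
    rw [abs_le]
    constructor <;> linarith
  have hbigW : ∀ n : ℕ, ∀ x ∈ W n, ε/2 ≤ ‖u x‖ := by
    intro n x hx
    obtain ⟨hx1, hx2⟩ := hx
    obtain ⟨hr1, hr2⟩ := hrg_bounds (ig n) (hig n)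
    have hTn : M₃ < |T n| := hTlarge n
    have h1 : ‖u (T n + rg (ig n)) - u (T n)‖ ≤ ε/8 :=
      hM₂ (ig n) (hig n) (T n) (by linarith)
    have habs2 : (M₀ : ℝ) + 1 ≤ |T n + rg (ig n)| := by
      have h5 : |T n| - |T n + rg (ig n)| ≤ |T n - (T n + rg (ig n))| :=
        abs_sub_abs_le_abs_sub _ _
      have h6 : |T n - (T n + rg (ig n))| = rg (ig n) := by
        rw [show T n - (T n + rg (ig n)) = -(rg (ig n)) by ring, abs_neg,
          abs_of_nonneg (by linarith)]
      linarith
    have h2' := hURC (T n + rg (ig n)) (x - (T n + rg (ig n))) habs2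
      (by linarith) (by linarith)
    rw [show (T n + rg (ig n)) + (x - (T n + rg (ig n))) = x by ring] at h2'
    have h3 := hTbig n
    have htri := dist_triangle (u x) (u (T n + rg (ig n))) (u (T n))
    simp only [dist_eq_norm] at htri
    have h5 : ‖u (T n)‖ - ‖u x‖ ≤ ‖u (T n) - u x‖ := norm_sub_norm_le _ _
    rw [norm_sub_rev] at h5
    linarith
  have hWdisjAux : ∀ m n : ℕ, m < n → Disjoint (W m) (W n) := by
    intro m n hmn
    rw [Set.disjoint_left]
    intro x hxm hxn
    have h1 := hWsub m x hxm
    have h2 := hWsub n x hxn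
    have h3 := hTmono m n hmn
    have h4 : |T n - T m| ≤ |T n - x| + |x - T m| := abs_sub_le _ _ _
    have h5 : |T n| - |T m| ≤ |T n - T m| := abs_sub_abs_le_abs_sub _ _
    have h6 : |T n - x| = |x - T n| := abs_sub_comm _ _
    rw [h6] at h4
    rw [hstepdef] at h3
    linarith
  have hWdisj : Pairwise (Function.onFun Disjoint W) := by
    intro m n hmn
    rcases lt_or_gt_of_ne hmn with h | h
    · exact hWdisjAux m n h
    · exact (hWdisjAux n m h).symm
  -- final contradiction via the integral
  have hFmeas : Measurable (fun x => ENNReal.ofReal (‖u x‖ ^ q)) := by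
    apply Measurable.ennreal_ofReal
    exact (Real.continuous_rpow_const (by linarith : (0:ℝ) ≤ q)).measurable.comp hu_meas.norm
  have hWmeas : ∀ n : ℕ, MeasurableSet (W n) := fun n => measurableSet_Ico
  have hWlow : ∀ n : ℕ,
      ENNReal.ofReal ((ε/2) ^ q) * η ≤ ∫⁻ x in W n, ENNReal.ofReal (‖u x‖ ^ q) ∂ρ := by
    intro n
    calc ENNReal.ofReal ((ε/2) ^ q) * η
        ≤ ENNReal.ofReal ((ε/2) ^ q) * ρ (W n) := mul_le_mul_right (hmass n) _
      _ = ∫⁻ _ in W n, ENNReal.ofReal ((ε/2) ^ q) ∂ρ := (setLIntegral_const _ _).symm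
      _ ≤ ∫⁻ x in W n, ENNReal.ofReal (‖u x‖ ^ q) ∂ρ := by
          apply setLIntegral_mono hFmeas
          intro x hx
          exact ENNReal.ofReal_le_ofReal
            (Real.rpow_le_rpow (by linarith) (hbigW n x hx) (by linarith))
  have hsum : (∑' _ : ℕ, ENNReal.ofReal ((ε/2) ^ q) * η)
      ≤ ∫⁻ x, ENNReal.ofReal (‖u x‖ ^ q) ∂ρ := by
    calc (∑' _ : ℕ, ENNReal.ofReal ((ε/2) ^ q) * η)
        ≤ ∑' n : ℕ, ∫⁻ x in W n, ENNReal.ofReal (‖u x‖ ^ q) ∂ρ :=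
          ENNReal.tsum_le_tsum hWlow
      _ = ∫⁻ x in ⋃ n : ℕ, W n, ENNReal.ofReal (‖u x‖ ^ q) ∂ρ :=
          (lintegral_iUnion hWmeas hWdisj _).symm
      _ ≤ ∫⁻ x, ENNReal.ofReal (‖u x‖ ^ q) ∂ρ := setLIntegral_le_lintegral _ _
  have hc0 : ENNReal.ofReal ((ε/2) ^ q) * η ≠ 0 :=
    mul_ne_zero (ne_of_gt (ENNReal.ofReal_pos.mpr (Real.rpow_pos_of_pos (by linarith) q))) hamass
  rw [ENNReal.tsum_const_eq_top_of_ne_zero hc0] at hsum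
  exact absurd (lt_of_le_of_lt hsum hLp) (lt_irrefl _)
end
end
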